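/- arXiv:1007.1938 — 6 statements merged into one kernel-verified Lean document; each statement's English description precedes it below -/
import Mathlib

section
/- Let p > 5 be prime. Among the orbits of the action of G_p on C_p: there is exactly one orbit of size (p−1)/2, namely the orbit containing (1,2,3); if p ≡ 1 (mod 6), there is exactly one orbit of size (p−1)/3, and all the remaining E(p) − 2 orbits have size p − 1; if p ≡ 5 (mod 6), all the remaining E(p) − 1 orbits have size p − 1. -/
/-- Boolean functions in `n` variables, with variables indexed by `ZMod n`
(index `i : ZMod n` corresponds to the variable `x_{i+1}` in 1-indexed notation,
so that "`a Mod n`" arithmetic on subscripts becomes arithmetic in `ZMod n`). -/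
abbrev BF (n : ℕ) := (ZMod n → ZMod 2) → ZMod 2

/-- The cubic MRS function `(1,j,k)` in `n` variables:
`x ↦ Σ_{i=1}^n x_i x_{(i+j-1) Mod n} x_{(i+k-1) Mod n}`, the sum taken in `GF(2)`. -/
def cubicMRS (n : ℕ) [NeZero n] (j k : ℕ) : BF n :=
  fun x => ∑ i : ZMod n,
    x i * x (i + ((j - 1 : ℕ) : ZMod n)) * x (i + ((k - 1 : ℕ) : ZMod n))

/-- `C_n`: the set of all cubic MRS functions `(1,j,k)`, `1 < j < k ≤ n`, in `n` variables. -/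
def cubicSet (n : ℕ) [NeZero n] : Set (BF n) :=
  {f | ∃ j k : ℕ, 1 < j ∧ j < k ∧ k ≤ n ∧ f = cubicMRS n j k}

/-- The set of cubic MRS functions `(1,j,k)` with `1 < j, k ≤ n`, `j ≠ k`. -/
def cubicSetNe (n : ℕ) [NeZero n] : Set (BF n) :=
  {f | ∃ j k : ℕ, 1 < j ∧ j ≤ n ∧ 1 < k ∧ k ≤ n ∧ j ≠ k ∧ f = cubicMRS n j k}

/-- The action of a permutation `μ` of the variables on a Boolean function:
`(μ·f)(x₁,…,xₙ) = f(x_{μ(1)},…,x_{μ(n)})`. -/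
def permAct {n : ℕ} (μ : Equiv.Perm (ZMod n)) (f : BF n) : BF n :=
  fun x => f (fun i => x (μ i))

/-- A Boolean function is rotation symmetric if it is invariant under the cyclic
shift of the variables. -/
def rotSym {n : ℕ} (f : BF n) : Prop :=
  ∀ x : ZMod n → ZMod 2, f (fun i => x (i + 1)) = f x

/-- A permutation `μ` preserves rotation symmetry (for cubic MRS functions in `n`
variables) if `μ·f` is rotation symmetric for every cubic MRS function `f`. -/
def preservesRS (n : ℕ) [NeZero n] (μ : Equiv.Perm (ZMod n)) : Prop :=
  ∀ f ∈ cubicSetNe n, rotSym (permAct μ f)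

/-- The permutation `σ_{τ,n} : i ↦ ((i-1)τ + 1) Mod n` of the variables, for `τ` a
unit mod `n`; in the 0-indexed coordinates used here it is `i ↦ τ·i` on `ZMod n`. -/
def sigmaPerm {n : ℕ} (u : (ZMod n)ˣ) : Equiv.Perm (ZMod n) where
  toFun := fun i => (u : ZMod n) * i
  invFun := fun i => ((u⁻¹ : (ZMod n)ˣ) : ZMod n) * i
  left_inv := fun i => by simp [← mul_assoc]
  right_inv := fun i => by simp [← mul_assoc]

/-- The orbit of a Boolean function `f` under the action of the group
`G_n = {σ_{τ,n} : gcd(τ,n) = 1}`. -/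
def orbit (n : ℕ) [NeZero n] (f : BF n) : Set (BF n) :=
  {g | ∃ u : (ZMod n)ˣ, g = permAct (sigmaPerm u) f}

/-- The set of orbits of the action of `G_n` on the set `C_n` of cubic MRS functions. -/
def orbitsOn (n : ℕ) [NeZero n] : Set (Set (BF n)) :=
  {S | ∃ f ∈ cubicSet n, S = orbit n f}

namespace MRSAux

variable {p : ℕ}


variable {p : ℕ}

def F (p : ℕ) [NeZero p] (a b : ZMod p) : BF p :=
  fun x => ∑ i : ZMod p, x i * x (i + a) * x (i + b)

lemma cubicMRS_eq (n : ℕ) [NeZero n] (j k : ℕ) :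
    cubicMRS n j k = F n ((j - 1 : ℕ) : ZMod n) ((k - 1 : ℕ) : ZMod n) := rfl


lemma act [NeZero p] (u : (ZMod p)ˣ) (a b : ZMod p) :
    permAct (sigmaPerm u) (F p a b) = F p (u * a) (u * b) := by
  funext x
  show (∑ i : ZMod p, x ((u : ZMod p) * i) * x ((u : ZMod p) * (i + a)) * x ((u : ZMod p) * (i + b)))
      = ∑ i : ZMod p, x i * x (i + (u : ZMod p) * a) * x (i + (u : ZMod p) * b)
  exact Fintype.sum_equiv (sigmaPerm u) _ _ (fun i => by
    show _ = x ((u:ZMod p) * i) * x ((u:ZMod p) * i + (u:ZMod p) * a) * x ((u:ZMod p) * i + (u:ZMod p) * b)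
    rw [mul_add, mul_add])

lemma F_swap [NeZero p] (a b : ZMod p) : F p a b = F p b a := by
  funext x
  exact Finset.sum_congr rfl fun i _ => by ring

lemma F_shift [NeZero p] (a b : ZMod p) : F p a b = F p (-a) (b - a) := by
  funext x
  exact Fintype.sum_equiv (Equiv.addRight a) _ _ (fun i => by
    show x i * x (i + a) * x (i + b) = x (i + a) * x (i + a + -a) * x (i + a + (b - a))
    have h1 : i + a + -a = i := by ring
    have h2 : i + a + (b - a) = i + b := by ring
    rw [h1, h2]; ring)

lemma mem_triple_cases [NeZero p] {a b c d i : ZMod p}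
    (hc : c ≠ 0) (hd : d ≠ 0) (hcd : c ≠ d)
    (h1 : i = 0 ∨ i = a ∨ i = b)
    (h2 : i + c = 0 ∨ i + c = a ∨ i + c = b)
    (h3 : i + d = 0 ∨ i + d = a ∨ i + d = b) :
    (i = 0 ∧ ((c = a ∧ d = b) ∨ (c = b ∧ d = a)))
  ∨ (i = -c ∧ ((c = -a ∧ d = b - a) ∨ (c = -b ∧ d = a - b)))
  ∨ (i = -d ∧ ((d = -a ∧ c = b - a) ∨ (d = -b ∧ c = a - b))) := by
  rcases h1 with rfl | rfl | rfl <;>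
  rcases h2 with h2 | h2 | h2 <;>
  rcases h3 with h3 | h3 | h3 <;>
  replace h2 := eq_sub_of_add_eq' h2 <;>
  replace h3 := eq_sub_of_add_eq' h3 <;>
  subst h2 <;> subst h3 <;>
  first
    | (refine absurd ?_ hc; ring1)
    | (refine absurd ?_ hd; ring1)
    | (refine absurd ?_ hcd; ring1)
    | (refine Or.inl ⟨?_, Or.inl ⟨?_, ?_⟩⟩ <;> ring1)
    | (refine Or.inl ⟨?_, Or.inr ⟨?_, ?_⟩⟩ <;> ring1)
    | (refine Or.inr (Or.inl ⟨?_, Or.inl ⟨?_, ?_⟩⟩) <;> ring1)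
    | (refine Or.inr (Or.inl ⟨?_, Or.inr ⟨?_, ?_⟩⟩) <;> ring1)
    | (refine Or.inr (Or.inr ⟨?_, Or.inl ⟨?_, ?_⟩⟩) <;> ring1)
    | (refine Or.inr (Or.inr ⟨?_, Or.inr ⟨?_, ?_⟩⟩) <;> ring1)
def chi (S : Finset (ZMod p)) : ZMod p → ZMod 2 := fun i => if i ∈ S then 1 else 0

lemma F_chi [NeZero p] (a b : ZMod p) (S : Finset (ZMod p)) :
    F p a b (chi S) =
      ((Finset.univ.filter (fun i : ZMod p => i ∈ S ∧ i + a ∈ S ∧ i + b ∈ S)).card : ZMod 2) := by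
  classical
  rw [F]
  rw [show (∑ i : ZMod p, chi S i * chi S (i + a) * chi S (i + b))
      = ∑ i : ZMod p, if i ∈ S ∧ i + a ∈ S ∧ i + b ∈ S then (1 : ZMod 2) else 0 from
    Finset.sum_congr rfl fun i _ => by
      by_cases h1 : i ∈ S <;> by_cases h2 : i + a ∈ S <;> by_cases h3 : i + b ∈ S <;>
        simp [chi, h1, h2, h3]]
  rw [Finset.sum_boole]

lemma nat_ne_zero [Fact p.Prime] (m : ℕ) (h0 : 0 < m) (hm : m < p) : (m : ZMod p) ≠ 0 := by
  intro h
  rw [ZMod.natCast_eq_zero_iff] at h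
  have := Nat.le_of_dvd h0 h
  omega

lemma two_ne (h5 : 5 < p) [Fact p.Prime] : (2 : ZMod p) ≠ 0 := by
  have := nat_ne_zero (p := p) 2 (by norm_num) (by omega); simpa using this

lemma three_ne (h5 : 5 < p) [Fact p.Prime] : (3 : ZMod p) ≠ 0 := by
  have := nat_ne_zero (p := p) 3 (by norm_num) (by omega); simpa using this
lemma filter_self [Fact p.Prime] (h5 : 5 < p) {a b : ZMod p}
    (ha : a ≠ 0) (hb : b ≠ 0) (hab : a ≠ b) :
    Finset.univ.filter
        (fun i : ZMod p => i ∈ ({0, a, b} : Finset (ZMod p)) ∧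
          i + a ∈ ({0, a, b} : Finset (ZMod p)) ∧ i + b ∈ ({0, a, b} : Finset (ZMod p)))
      = {0} := by
  have h2 := two_ne h5 (p := p)
  have h3 := three_ne h5 (p := p)
  ext i
  simp only [Finset.mem_filter, Finset.mem_univ, true_and, Finset.mem_insert,
    Finset.mem_singleton]
  constructor
  · rintro ⟨m1, m2, m3⟩
    rcases mem_triple_cases ha hb hab m1 m2 m3 with
      ⟨hi, _⟩ | ⟨hi, ⟨e1, e2⟩ | ⟨e1, e2⟩⟩ | ⟨hi, ⟨e1, e2⟩ | ⟨e1, e2⟩⟩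
    · exact hi
    · exact absurd (show (2 : ZMod p) * a = 0 by linear_combination e1) (by
        intro h; rcases mul_eq_zero.mp h with h | h; exacts [h2 h, ha h])
    · exact absurd (show (3 : ZMod p) * b = 0 by linear_combination e1 + e2) (by
        intro h; rcases mul_eq_zero.mp h with h | h; exacts [h3 h, hb h])
    · exact absurd (show (3 : ZMod p) * a = 0 by linear_combination e1 + e2) (by
        intro h; rcases mul_eq_zero.mp h with h | h; exacts [h3 h, ha h])
    · exact absurd (show (2 : ZMod p) * b = 0 by linear_combination e1) (by
        intro h; rcases mul_eq_zero.mp h with h | h; exacts [h2 h, hb h])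
  · rintro rfl
    refine ⟨Or.inl rfl, Or.inr (Or.inl (by ring)), Or.inr (Or.inr (by ring))⟩

lemma F_eq_iff [Fact p.Prime] (h5 : 5 < p) {a b c d : ZMod p}
    (ha : a ≠ 0) (hb : b ≠ 0) (hab : a ≠ b)
    (hc : c ≠ 0) (hd : d ≠ 0) (hcd : c ≠ d) :
    F p a b = F p c d ↔
      ((c = a ∧ d = b) ∨ (c = b ∧ d = a) ∨ (c = -a ∧ d = b - a) ∨ (c = b - a ∧ d = -a) ∨
        (c = -b ∧ d = a - b) ∨ (c = a - b ∧ d = -b)) := by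
  classical
  constructor
  · intro h
    have h1 : F p a b (chi {0, a, b}) = 1 := by
      rw [F_chi, filter_self h5 ha hb hab]; simp
    rw [h, F_chi] at h1
    set T := Finset.univ.filter
      (fun i : ZMod p => i ∈ ({0, a, b} : Finset (ZMod p)) ∧
        i + c ∈ ({0, a, b} : Finset (ZMod p)) ∧ i + d ∈ ({0, a, b} : Finset (ZMod p))) with hT
    have hne : T.Nonempty := by
      rw [Finset.nonempty_iff_ne_empty]
      intro hE
      rw [hE] at h1
      simp at h1
    obtain ⟨i, hi⟩ := hne
    rw [hT, Finset.mem_filter] at hi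
    obtain ⟨-, m1, m2, m3⟩ := hi
    simp only [Finset.mem_insert, Finset.mem_singleton] at m1 m2 m3
    rcases mem_triple_cases hc hd hcd m1 m2 m3 with
      ⟨-, ⟨e1, e2⟩ | ⟨e1, e2⟩⟩ | ⟨-, ⟨e1, e2⟩ | ⟨e1, e2⟩⟩ | ⟨-, ⟨e1, e2⟩ | ⟨e1, e2⟩⟩
    · exact Or.inl ⟨e1, e2⟩
    · exact Or.inr (Or.inl ⟨e1, e2⟩)
    · exact Or.inr (Or.inr (Or.inl ⟨e1, e2⟩))
    · exact Or.inr (Or.inr (Or.inr (Or.inr (Or.inl ⟨e1, e2⟩))))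
    · exact Or.inr (Or.inr (Or.inr (Or.inl ⟨e2, e1⟩)))
    · exact Or.inr (Or.inr (Or.inr (Or.inr (Or.inr ⟨e2, e1⟩))))
  · rintro (⟨h1, h2⟩ | ⟨h1, h2⟩ | ⟨h1, h2⟩ | ⟨h1, h2⟩ | ⟨h1, h2⟩ | ⟨h1, h2⟩) <;>
      rw [h1, h2] <;>
      first
        | rfl
        | exact F_swap a b
        | exact F_shift a b
        | exact (F_shift a b).trans (F_swap _ _)
        | exact (F_swap a b).trans (F_shift b a)
        | exact (F_swap a b).trans ((F_shift b a).trans (F_swap _ _))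
def g (p : ℕ) [NeZero p] (t : ZMod p) : (ZMod p)ˣ → BF p :=
  fun u => F p (u : ZMod p) ((u : ZMod p) * t)

lemma g_eq_permAct [NeZero p] (t : ZMod p) (u : (ZMod p)ˣ) :
    g p t u = permAct (sigmaPerm u) (F p 1 t) := by
  rw [act, mul_one]
  rfl

lemma g_one [NeZero p] (t : ZMod p) : g p t 1 = F p 1 t := by
  simp [g]

lemma permAct_g [NeZero p] (t : ZMod p) (w u : (ZMod p)ˣ) :
    permAct (sigmaPerm w) (g p t u) = g p t (w * u) := by
  simp [g, act, Units.val_mul, mul_assoc]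

lemma orbit_F [NeZero p] (t : ZMod p) : orbit p (F p 1 t) = Set.range (g p t) := by
  ext h
  constructor
  · rintro ⟨u, rfl⟩; exact ⟨u, g_eq_permAct t u⟩
  · rintro ⟨u, rfl⟩; exact ⟨u, g_eq_permAct t u⟩

lemma g_eq_iff [NeZero p] (t : ZMod p) (u v : (ZMod p)ˣ) :
    g p t v = g p t u ↔ g p t (u⁻¹ * v) = g p t 1 := by
  constructor
  · intro h
    have := congrArg (permAct (sigmaPerm u⁻¹)) h
    rwa [permAct_g, permAct_g, inv_mul_cancel] at this
  · intro h
    have := congrArg (permAct (sigmaPerm u)) h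
    rwa [permAct_g, permAct_g, mul_inv_cancel_left, mul_one] at this

noncomputable def stab (p : ℕ) [NeZero p] (t : ZMod p) : Finset (ZMod p)ˣ :=
  letI := Classical.decEq (BF p)
  Finset.univ.filter (fun u => g p t u = g p t 1)

lemma count [Fact p.Prime] (t : ZMod p) :
    (stab p t).card * (orbit p (F p 1 t)).ncard = p - 1 := by
  classical
  rw [orbit_F]
  have hr : Set.range (g p t) = ↑(Finset.univ.image (g p t)) := by
    ext y; simp
  rw [hr, Set.ncard_coe_finset]
  have fib : ∀ u : (ZMod p)ˣ,
      (Finset.univ.filter (fun v => g p t v = g p t u)) = (stab p t).image (fun w => u * w) := by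
    intro u
    ext v
    simp only [Finset.mem_filter, Finset.mem_univ, true_and, Finset.mem_image, stab]
    constructor
    · intro h
      refine ⟨u⁻¹ * v, by simpa using (g_eq_iff t u v).mp h, by group⟩
    · rintro ⟨w, hw, rfl⟩
      rw [g_eq_iff]
      simpa using (by simpa using hw : g p t w = g p t 1)
  have hcard : ∀ u : (ZMod p)ˣ,
      (Finset.univ.filter (fun v => g p t v = g p t u)).card = (stab p t).card := by
    intro u
    rw [fib u, Finset.card_image_of_injective _ (mul_right_injective u)]
  have key := Finset.card_eq_sum_card_fiberwise
    (f := g p t) (s := Finset.univ) (t := Finset.univ.image (g p t))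
    (fun x _ => Finset.mem_image_of_mem _ (Finset.mem_univ x))
  have : ∀ y ∈ Finset.univ.image (g p t),
      (Finset.univ.filter (fun v => g p t v = y)).card = (stab p t).card := by
    intro y hy
    obtain ⟨u, -, rfl⟩ := Finset.mem_image.mp hy
    exact hcard u
  rw [Finset.sum_congr rfl this, Finset.sum_const, smul_eq_mul] at key
  have hc : Finset.univ.card = Fintype.card (ZMod p)ˣ := rfl
  rw [hc, ZMod.card_units_eq_totient, Nat.totient_prime Fact.out] at key
  rw [mul_comm, ← key]

lemma orbit_g [NeZero p] (t : ZMod p) (u : (ZMod p)ˣ) :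
    orbit p (g p t u) = orbit p (F p 1 t) := by
  rw [orbit_F]
  ext h
  constructor
  · rintro ⟨v, rfl⟩
    exact ⟨v * u, (permAct_g t v u).symm⟩
  · rintro ⟨w, rfl⟩
    exact ⟨w * u⁻¹, by rw [permAct_g, inv_mul_cancel_right]⟩
lemma mem_stab_iff [Fact p.Prime] (h5 : 5 < p) {t : ZMod p} (ht0 : t ≠ 0) (ht1 : t ≠ 1)
    (u : (ZMod p)ˣ) :
    u ∈ stab p t ↔
      ((u : ZMod p) = 1 ∨
       ((u : ZMod p) = t ∧ (u : ZMod p) * t = 1) ∨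
       ((u : ZMod p) = -1 ∧ (u : ZMod p) * t = t - 1) ∨
       ((u : ZMod p) = t - 1 ∧ (u : ZMod p) * t = -1) ∨
       ((u : ZMod p) = -t ∧ (u : ZMod p) * t = 1 - t) ∨
       ((u : ZMod p) = 1 - t ∧ (u : ZMod p) * t = -t)) := by
  classical
  have hmem : u ∈ stab p t ↔ g p t u = g p t 1 := by
    simp [stab]
  have hcd : (u : ZMod p) ≠ (u : ZMod p) * t := by
    intro h
    exact ht1 (mul_left_cancel₀ (Units.ne_zero u) (by rw [mul_one, ← h])).symm
  rw [hmem, g_one]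
  show F p (u : ZMod p) _ = _ ↔ _
  rw [show (F p (u:ZMod p) ((u:ZMod p)*t) = F p 1 t) ↔ (F p 1 t = F p (u:ZMod p) ((u:ZMod p)*t))
      from eq_comm]
  rw [F_eq_iff h5 one_ne_zero ht0 (Ne.symm ht1) (Units.ne_zero u)
      (mul_ne_zero (Units.ne_zero u) ht0) hcd]
  constructor
  · rintro (⟨h, -⟩ | h | h | h | h | h)
    · exact Or.inl h
    · exact Or.inr (Or.inl h)
    · exact Or.inr (Or.inr (Or.inl h))
    · exact Or.inr (Or.inr (Or.inr (Or.inl h)))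
    · exact Or.inr (Or.inr (Or.inr (Or.inr (Or.inl h))))
    · exact Or.inr (Or.inr (Or.inr (Or.inr (Or.inr h))))
  · rintro (h | h | h | h | h | h)
    · exact Or.inl ⟨h, by rw [h, one_mul]⟩
    · exact Or.inr (Or.inl h)
    · exact Or.inr (Or.inr (Or.inl h))
    · exact Or.inr (Or.inr (Or.inr (Or.inl h)))
    · exact Or.inr (Or.inr (Or.inr (Or.inr (Or.inl h))))
    · exact Or.inr (Or.inr (Or.inr (Or.inr (Or.inr h))))

lemma not_both [Fact p.Prime] (h5 : 5 < p) {t : ZMod p}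
    (h2 : t = -1 ∨ t = 2 ∨ 2 * t = 1) (h3 : t * t - t + 1 = 0) : False := by
  apply three_ne h5 (p := p)
  rcases h2 with rfl | rfl | h2
  · linear_combination h3
  · linear_combination h3
  · linear_combination 4 * h3 - (2 * t - 1) * h2

lemma stab_special2 [Fact p.Prime] (h5 : 5 < p) {t : ZMod p} (ht0 : t ≠ 0) (ht1 : t ≠ 1)
    (hsp : t = -1 ∨ t = 2 ∨ 2 * t = 1) : (stab p t).card = 2 := by
  have hne : (1 : (ZMod p)ˣ) ≠ -1 := by
    intro h
    apply two_ne h5 (p := p)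
    have := congrArg (Units.val) h
    simp only [Units.val_one, Units.val_neg] at this
    linear_combination this
  have hstab : stab p t = {1, -1} := by
    ext u
    rw [mem_stab_iff h5 ht0 ht1]
    simp only [Finset.mem_insert, Finset.mem_singleton]
    constructor
    · rintro (h | ⟨e1, e2⟩ | ⟨e1, e2⟩ | ⟨e1, e2⟩ | ⟨e1, e2⟩ | ⟨e1, e2⟩)
      · exact Or.inl (Units.val_eq_one.mp h)
      · -- u = t, t^2 = 1
        rw [e1] at e2
        have htm : t = -1 := by
          rcases mul_eq_zero.mp (show (t - 1) * (t + 1) = 0 by linear_combination e2) with h | h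
          · exact absurd (by linear_combination h) ht1
          · linear_combination h
        refine Or.inr (Units.ext ?_)
        rw [Units.val_neg, Units.val_one, e1, htm]
      · exact Or.inr (Units.ext (by rw [Units.val_neg, Units.val_one, e1]))
      · rw [e1] at e2
        exact absurd (show t * t - t + 1 = 0 by linear_combination e2) (fun h => not_both h5 hsp h)
      · rw [e1] at e2
        exact absurd (show t * t - t + 1 = 0 by linear_combination -e2) (fun h => not_both h5 hsp h)
      · rw [e1] at e2
        have ht2 : t = 2 := by
          rcases mul_eq_zero.mp (show t * (t - 2) = 0 by linear_combination -e2) with h | h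
          · exact absurd h ht0
          · linear_combination h
        refine Or.inr (Units.ext ?_)
        rw [Units.val_neg, Units.val_one, e1, ht2]
        norm_num
    · rintro (rfl | rfl)
      · exact Or.inl (by rw [Units.val_one])
      · have hu : ((-1 : (ZMod p)ˣ) : ZMod p) = -1 := by
          rw [Units.val_neg, Units.val_one]
        rcases hsp with rfl | rfl | h2
        · exact Or.inr (Or.inl ⟨hu, by rw [hu]; ring⟩)
        · exact Or.inr (Or.inr (Or.inr (Or.inr (Or.inr ⟨by rw [hu]; norm_num, by rw [hu]; ring⟩))))
        · exact Or.inr (Or.inr (Or.inl ⟨hu, by rw [hu]; linear_combination -h2⟩))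
  rw [hstab]
  rw [Finset.card_insert_of_notMem (by simpa using hne), Finset.card_singleton]

lemma stab_special3 [Fact p.Prime] (h5 : 5 < p) {t : ZMod p} (ht0 : t ≠ 0) (ht1 : t ≠ 1)
    (hsp : t * t - t + 1 = 0) : (stab p t).card = 3 := by
  have h3 := three_ne h5 (p := p)
  have ht2 : t ≠ 2 := by intro h; apply h3; rw [h] at hsp; linear_combination hsp
  have htm1 : t ≠ -1 := by intro h; apply h3; rw [h] at hsp; linear_combination hsp
  have h2t : 2 * t ≠ 1 := by intro h; apply h3; linear_combination 4 * hsp - (2 * t - 1) * h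
  have hu2 : t - 1 ≠ 0 := sub_ne_zero.mpr ht1
  have hu3 : -t ≠ 0 := neg_ne_zero.mpr ht0
  have hstab : stab p t = {1, Units.mk0 (t - 1) hu2, Units.mk0 (-t) hu3} := by
    ext u
    rw [mem_stab_iff h5 ht0 ht1]
    simp only [Finset.mem_insert, Finset.mem_singleton]
    constructor
    · rintro (h | ⟨e1, e2⟩ | ⟨e1, e2⟩ | ⟨e1, e2⟩ | ⟨e1, e2⟩ | ⟨e1, e2⟩)
      · exact Or.inl (Units.val_eq_one.mp h)
      · rw [e1] at e2
        exact absurd (show t = 2 by linear_combination e2 - hsp) ht2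
      · rw [e1] at e2
        exact absurd (show 2 * t = 1 by linear_combination -e2) h2t
      · exact Or.inr (Or.inl (Units.ext (by rw [Units.val_mk0, e1])))
      · exact Or.inr (Or.inr (Units.ext (by rw [Units.val_mk0, e1])))
      · rw [e1] at e2
        have : t = 2 := by
          rcases mul_eq_zero.mp (show t * (t - 2) = 0 by linear_combination -e2) with h | h
          · exact absurd h ht0
          · linear_combination h
        exact absurd this ht2
    · rintro (rfl | rfl | rfl)
      · exact Or.inl (by rw [Units.val_one])
      · refine Or.inr (Or.inr (Or.inr (Or.inl ⟨by rw [Units.val_mk0], ?_⟩)))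
        rw [Units.val_mk0]; linear_combination hsp
      · refine Or.inr (Or.inr (Or.inr (Or.inr (Or.inl ⟨by rw [Units.val_mk0], ?_⟩))))
        rw [Units.val_mk0]; linear_combination -hsp
  rw [hstab]
  have d1 : (1 : (ZMod p)ˣ) ≠ Units.mk0 (t - 1) hu2 := by
    intro h; apply ht2
    have := congrArg Units.val h
    rw [Units.val_one, Units.val_mk0] at this
    linear_combination -this
  have d2 : (1 : (ZMod p)ˣ) ≠ Units.mk0 (-t) hu3 := by
    intro h; apply htm1
    have := congrArg Units.val h
    rw [Units.val_one, Units.val_mk0] at this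
    linear_combination this
  have d3 : Units.mk0 (t - 1) hu2 ≠ Units.mk0 (-t) hu3 := by
    intro h; apply h2t
    have := congrArg Units.val h
    rw [Units.val_mk0, Units.val_mk0] at this
    linear_combination this
  rw [Finset.card_insert_of_notMem (by simp [d1, d2]),
    Finset.card_insert_of_notMem (by simpa using d3), Finset.card_singleton]

lemma stab_generic [Fact p.Prime] (h5 : 5 < p) {t : ZMod p} (ht0 : t ≠ 0) (ht1 : t ≠ 1)
    (hn2 : ¬(t = -1 ∨ t = 2 ∨ 2 * t = 1)) (hn3 : ¬(t * t - t + 1 = 0)) :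
    (stab p t).card = 1 := by
  push_neg at hn2
  obtain ⟨hm1, h2, h21⟩ := hn2
  have hstab : stab p t = {1} := by
    ext u
    rw [mem_stab_iff h5 ht0 ht1]
    simp only [Finset.mem_singleton]
    constructor
    · rintro (h | ⟨e1, e2⟩ | ⟨e1, e2⟩ | ⟨e1, e2⟩ | ⟨e1, e2⟩ | ⟨e1, e2⟩)
      · exact Units.val_eq_one.mp h
      · rw [e1] at e2
        have : t = -1 := by
          rcases mul_eq_zero.mp (show (t - 1) * (t + 1) = 0 by linear_combination e2) with h | h
          · exact absurd (by linear_combination h) ht1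
          · linear_combination h
        exact absurd this hm1
      · rw [e1] at e2
        exact absurd (show 2 * t = 1 by linear_combination -e2) h21
      · rw [e1] at e2
        exact absurd (show t * t - t + 1 = 0 by linear_combination e2) hn3
      · rw [e1] at e2
        exact absurd (show t * t - t + 1 = 0 by linear_combination -e2) hn3
      · rw [e1] at e2
        have : t = 2 := by
          rcases mul_eq_zero.mp (show t * (t - 2) = 0 by linear_combination -e2) with h | h
          · exact absurd h ht0
          · linear_combination h
        exact absurd this h2
    · rintro rfl
      exact Or.inl (by rw [Units.val_one])
  rw [hstab, Finset.card_singleton]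
lemma orbit_special2 [Fact p.Prime] (h5 : 5 < p) {t : ZMod p} (ht0 : t ≠ 0) (ht1 : t ≠ 1)
    (hsp : t = -1 ∨ t = 2 ∨ 2 * t = 1) :
    orbit p (F p 1 t) = orbit p (F p 1 2) := by
  rcases hsp with rfl | rfl | h2
  · have hg : g p 2 (-1 : (ZMod p)ˣ) = F p (-1) (-2) := by
      show F p ((-1 : (ZMod p)ˣ) : ZMod p) (((-1 : (ZMod p)ˣ) : ZMod p) * 2) = _
      rw [Units.val_neg, Units.val_one]
      norm_num
    have hf : F p (-1 : ZMod p) (-2) = F p 1 (-1) := by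
      have h := F_shift (p := p) (-1 : ZMod p) (-2)
      rw [show (-(-1 : ZMod p)) = 1 by ring, show ((-2 : ZMod p) - (-1)) = -1 by ring] at h
      exact h
    rw [← hf, ← hg, orbit_g]
  · rfl
  · have hg : g p 2 (Units.mk0 t ht0) = F p t 1 := by
      show F p t (t * 2) = _
      rw [show t * 2 = 1 by linear_combination h2]
    rw [F_swap 1 t, ← hg, orbit_g]

lemma orbit_one_sub [Fact p.Prime] (t : ZMod p) :
    orbit p (F p 1 (1 - t)) = orbit p (F p 1 t) := by
  have hg : g p t (-1 : (ZMod p)ˣ) = F p (-1) (-t) := by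
    show F p ((-1 : (ZMod p)ˣ) : ZMod p) (((-1 : (ZMod p)ˣ) : ZMod p) * t) = _
    rw [Units.val_neg, Units.val_one, show (-1 : ZMod p) * t = -t by ring]
  have hf : F p (-1 : ZMod p) (-t) = F p 1 (1 - t) := by
    have h := F_shift (p := p) (-1 : ZMod p) (-t)
    rw [show (-(-1 : ZMod p)) = 1 by ring, show ((-t : ZMod p) - (-1)) = 1 - t by ring] at h
    exact h
  rw [← hf, ← hg, orbit_g]

lemma F_mem_cubicSet [NeZero p] {t : ZMod p} (ht0 : t ≠ 0) (ht1 : t ≠ 1) :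
    F p 1 t ∈ cubicSet p := by
  have hvt : ((t.val : ℕ) : ZMod p) = t := ZMod.natCast_rightInverse t
  have hv0 : t.val ≠ 0 := fun h => ht0 ((ZMod.val_eq_zero t).mp h)
  have hv1 : t.val ≠ 1 := by
    intro h
    apply ht1
    rw [← hvt, h, Nat.cast_one]
  have hvp : t.val < p := ZMod.val_lt t
  refine ⟨2, t.val + 1, by norm_num, by omega, by omega, ?_⟩
  rw [cubicMRS_eq]
  have e1 : ((2 - 1 : ℕ) : ZMod p) = 1 := by norm_num
  have e2 : ((t.val + 1 - 1 : ℕ) : ZMod p) = t := by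
    rw [show t.val + 1 - 1 = t.val from rfl, hvt]
  rw [e1, e2]

lemma orbit_of_mem [Fact p.Prime] (h5 : 5 < p) {S : Set (BF p)} (hS : S ∈ orbitsOn p) :
    ∃ t : ZMod p, t ≠ 0 ∧ t ≠ 1 ∧ S = orbit p (F p 1 t) := by
  obtain ⟨f, ⟨j, k, hj, hjk, hk, rfl⟩, rfl⟩ := hS
  have ha : ((j - 1 : ℕ) : ZMod p) ≠ 0 := by
    rw [Ne, ZMod.natCast_eq_zero_iff]
    intro hdvd
    have := Nat.le_of_dvd (by omega) hdvd
    omega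
  have hb : ((k - 1 : ℕ) : ZMod p) ≠ 0 := by
    rw [Ne, ZMod.natCast_eq_zero_iff]
    intro hdvd
    have := Nat.le_of_dvd (by omega) hdvd
    omega
  have hab : ((j - 1 : ℕ) : ZMod p) ≠ ((k - 1 : ℕ) : ZMod p) := by
    intro h
    have h2 : (((k - 1) - (j - 1) : ℕ) : ZMod p) = 0 := by
      rw [Nat.cast_sub (by omega)]
      rw [← h]
      ring
    rw [ZMod.natCast_eq_zero_iff] at h2
    have := Nat.le_of_dvd (by omega) h2
    omega
  set a : ZMod p := ((j - 1 : ℕ) : ZMod p)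
  set b : ZMod p := ((k - 1 : ℕ) : ZMod p)
  refine ⟨a⁻¹ * b, mul_ne_zero (inv_ne_zero ha) hb, ?_, ?_⟩
  · rw [Ne, inv_mul_eq_one₀ ha]
    exact hab
  · have hmrs : cubicMRS p j k = g p (a⁻¹ * b) (Units.mk0 a ha) := by
      rw [cubicMRS_eq]
      show F p a b = F p a (a * (a⁻¹ * b))
      rw [mul_inv_cancel_left₀ ha]
    rw [hmrs, orbit_g]

lemma cubic123 [NeZero p] : cubicMRS p 2 3 = F p 1 2 := by
  rw [cubicMRS_eq]
  norm_num

lemma exists_root [Fact p.Prime] (h5 : 5 < p) (h6 : p % 6 = 1) :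
    ∃ t : ZMod p, t ≠ 0 ∧ t ≠ 1 ∧ t * t - t + 1 = 0 := by
  obtain ⟨g0, hg0⟩ := IsCyclic.exists_generator (α := (ZMod p)ˣ)
  have hord : orderOf g0 = p - 1 := by
    rw [orderOf_eq_card_of_forall_mem_zpowers hg0, Nat.card_eq_fintype_card,
      ZMod.card_units_eq_totient, Nat.totient_prime Fact.out]
  set ω : (ZMod p)ˣ := g0 ^ ((p - 1) / 3) with hωdef
  have hω3 : ω ^ 3 = 1 := by
    rw [hωdef, ← pow_mul, show (p - 1) / 3 * 3 = p - 1 by omega, ← hord]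
    exact pow_orderOf_eq_one g0
  have hω1 : ω ≠ 1 := by
    intro h
    have hd := orderOf_dvd_of_pow_eq_one h
    rw [hord] at hd
    have := Nat.le_of_dvd (by omega) hd
    omega
  have hval : ((ω : ZMod p)) ^ 3 = 1 := by
    rw [← Units.val_pow_eq_pow_val, hω3, Units.val_one]
  have hne : (ω : ZMod p) ≠ 1 := fun h => hω1 (Units.val_eq_one.mp h)
  have hroot : (ω : ZMod p) ^ 2 + (ω : ZMod p) + 1 = 0 := by
    rcases mul_eq_zero.mp (show ((ω : ZMod p) - 1) * ((ω : ZMod p) ^ 2 + (ω : ZMod p) + 1) = 0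
        by linear_combination hval) with h | h
    · exact absurd (by linear_combination h) hne
    · exact h
  refine ⟨-(ω : ZMod p), by simpa using Units.ne_zero ω, ?_, by linear_combination hroot⟩
  intro h
  have hω : (ω : ZMod p) = -1 := by linear_combination -h
  apply two_ne h5 (p := p)
  rw [hω] at hval
  linear_combination -hval

lemma root_cases [Fact p.Prime] {t s : ZMod p} (ht : t * t - t + 1 = 0)
    (hs : s * s - s + 1 = 0) : s = t ∨ s = 1 - t := by
  rcases mul_eq_zero.mp (show (s - t) * (s + t - 1) = 0 by linear_combination hs - ht) with h | h
  · exact Or.inl (by linear_combination h)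
  · exact Or.inr (by linear_combination h)

lemma no_root [Fact p.Prime] (h5 : 5 < p) (h6 : p % 6 = 5) {t : ZMod p}
    (ht : t * t - t + 1 = 0) : False := by
  have h3 := three_ne h5 (p := p)
  have ht0 : t ≠ 0 := by rintro rfl; apply h3; linear_combination 3 * ht
  have hs3 : (-t) ^ 3 = (1 : ZMod p) := by linear_combination (-(t + 1)) * ht
  have hs1 : (-t : ZMod p) ≠ 1 := by
    intro h
    apply h3
    have htm : t = -1 := by linear_combination -h
    rw [htm] at ht
    linear_combination ht
  have hs0 : (-t : ZMod p) ≠ 0 := neg_ne_zero.mpr ht0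
  set S : (ZMod p)ˣ := Units.mk0 (-t) hs0 with hSdef
  have hS3 : S ^ 3 = 1 := by
    apply Units.ext
    rw [Units.val_pow_eq_pow_val, Units.val_one, hSdef, Units.val_mk0]
    exact hs3
  have hdvd : orderOf S ∣ 3 := orderOf_dvd_of_pow_eq_one hS3
  have hone : orderOf S ≠ 1 := by
    intro h
    rw [orderOf_eq_one_iff] at h
    apply hs1
    rw [← Units.val_mk0 (a := -t) hs0, ← hSdef, h, Units.val_one]
  have hord : orderOf S = 3 := by
    rcases (Nat.prime_three).eq_one_or_self_of_dvd _ hdvd with h | h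
    · exact absurd h hone
    · exact h
  have hcard : (3 : ℕ) ∣ p - 1 := by
    rw [← hord]
    have := orderOf_dvd_card (x := S)
    rwa [ZMod.card_units_eq_totient, Nat.totient_prime Fact.out] at this
  omega

lemma classify [Fact p.Prime] (h5 : 5 < p) {S : Set (BF p)} (hS : S ∈ orbitsOn p) :
    ∃ t : ZMod p, t ≠ 0 ∧ t ≠ 1 ∧ S = orbit p (F p 1 t) ∧
      ((¬(t = -1 ∨ t = 2 ∨ 2 * t = 1) ∧ ¬(t * t - t + 1 = 0) ∧ S.ncard = p - 1) ∨
       ((t = -1 ∨ t = 2 ∨ 2 * t = 1) ∧ S = orbit p (F p 1 2) ∧ 2 * S.ncard = p - 1) ∨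
       ((t * t - t + 1 = 0) ∧ 3 * S.ncard = p - 1)) := by
  obtain ⟨t, ht0, ht1, rfl⟩ := orbit_of_mem h5 hS
  refine ⟨t, ht0, ht1, rfl, ?_⟩
  by_cases hsp2 : t = -1 ∨ t = 2 ∨ 2 * t = 1
  · refine Or.inr (Or.inl ⟨hsp2, orbit_special2 h5 ht0 ht1 hsp2, ?_⟩)
    have h := count t
    rwa [stab_special2 h5 ht0 ht1 hsp2] at h
  by_cases hsp3 : t * t - t + 1 = 0
  · refine Or.inr (Or.inr ⟨hsp3, ?_⟩)
    have h := count t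
    rwa [stab_special3 h5 ht0 ht1 hsp3] at h
  · refine Or.inl ⟨hsp2, hsp3, ?_⟩
    have h := count t
    rwa [stab_generic h5 ht0 ht1 hsp2 hsp3, one_mul] at h


end MRSAux

open MRSAux

/-- For a prime `p > 5`: there is exactly one orbit of size `(p-1)/2`, namely the orbit
of `(1,2,3)`; if `p ≡ 1 (mod 6)` there is exactly one orbit of size `(p-1)/3` and all
other orbits have size `p-1`; if `p ≡ 5 (mod 6)` all orbits other than that of `(1,2,3)`
have size `p-1`. -/
theorem orbit_sizes_prime (p : ℕ) [NeZero p] (hp : p.Prime) (h5 : 5 < p) :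
    ({S | S ∈ orbitsOn p ∧ S.ncard = (p - 1) / 2} = {orbit p (cubicMRS p 2 3)}) ∧
    (p % 6 = 1 →
      ∃ T : Set (BF p),
        {S | S ∈ orbitsOn p ∧ S.ncard = (p - 1) / 3} = {T} ∧
        ∀ S ∈ orbitsOn p, S ≠ orbit p (cubicMRS p 2 3) → S ≠ T → S.ncard = p - 1) ∧
    (p % 6 = 5 →
      ∀ S ∈ orbitsOn p, S ≠ orbit p (cubicMRS p 2 3) → S.ncard = p - 1) := by
  haveI : Fact p.Prime := ⟨hp⟩
  have h20 : (2 : ZMod p) ≠ 0 := two_ne h5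
  have h21 : (2 : ZMod p) ≠ 1 := by
    intro h
    exact one_ne_zero (α := ZMod p) (by linear_combination h)
  have count2 : 2 * (orbit p (F p 1 2)).ncard = p - 1 := by
    have h := count (p := p) 2
    rwa [stab_special2 h5 h20 h21 (Or.inr (Or.inl rfl))] at h
  have mem123 : orbit p (cubicMRS p 2 3) ∈ orbitsOn p :=
    ⟨cubicMRS p 2 3, ⟨2, 3, by norm_num, by norm_num, by omega, rfl⟩, rfl⟩
  refine ⟨?_, ?_, ?_⟩
  · ext S
    simp only [Set.mem_setOf_eq, Set.mem_singleton_iff]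
    constructor
    · rintro ⟨hS, hcard⟩
      obtain ⟨t, ht0, ht1, rfl, hcase⟩ := classify h5 hS
      rcases hcase with ⟨-, -, hn⟩ | ⟨-, heq, hn⟩ | ⟨-, hn⟩
      · omega
      · rw [heq, cubic123]
      · omega
    · rintro rfl
      rw [cubic123]
      exact ⟨by rw [← cubic123]; exact mem123, by omega⟩
  · intro h6
    obtain ⟨t₀, h00, h01, hr⟩ := exists_root h5 h6
    have count3 : 3 * (orbit p (F p 1 t₀)).ncard = p - 1 := by
      have h := count (p := p) t₀
      rwa [stab_special3 h5 h00 h01 hr] at h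
    refine ⟨orbit p (F p 1 t₀), ?_, ?_⟩
    · ext S
      simp only [Set.mem_setOf_eq, Set.mem_singleton_iff]
      constructor
      · rintro ⟨hS, hcard⟩
        obtain ⟨t, ht0, ht1, rfl, hcase⟩ := classify h5 hS
        rcases hcase with ⟨-, -, hn⟩ | ⟨-, heq, hn⟩ | ⟨hsp3, hn⟩
        · omega
        · omega
        · rcases root_cases hr hsp3 with h | h
          · rw [h]
          · rw [h]
            exact orbit_one_sub t₀
      · rintro rfl
        exact ⟨⟨F p 1 t₀, F_mem_cubicSet h00 h01, rfl⟩, by omega⟩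
    · intro S hS hne123 hneT
      obtain ⟨t, ht0, ht1, rfl, hcase⟩ := classify h5 hS
      rcases hcase with ⟨-, -, hn⟩ | ⟨-, heq, hn⟩ | ⟨hsp3, hn⟩
      · exact hn
      · exact absurd (by rw [heq, cubic123]) hne123
      · rcases root_cases hr hsp3 with h | h
        · exact absurd (by rw [h]) hneT
        · exact absurd (by rw [h]; exact orbit_one_sub t₀) hneT
  · intro h6 S hS hne123
    obtain ⟨t, ht0, ht1, rfl, hcase⟩ := classify h5 hS
    rcases hcase with ⟨-, -, hn⟩ | ⟨-, heq, hn⟩ | ⟨hsp3, hn⟩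
    · exact hn
    · exact absurd (by rw [heq, cubic123]) hne123
    · exact absurd hsp3 (fun h => no_root h5 h6 h)
end

section
/- Let p be a prime and let (1,j,k) be any cubic MRS function in p variables (1 < j < k ≤ p). Then there exist an integer τ not divisible by p and an integer m with 2 < m ≤ p such that σ_{τ,p}·(1,j,k) = (1,2,m). In particular, every orbit of the action of G_p on C_p contains a function of the form (1,2,m) with m > 2. -/
/-- For a prime `p` and any cubic MRS function `(1,j,k)` in `p` variables, there are
`τ` not divisible by `p` and `m` with `2 < m ≤ p` such that
`σ_{τ,p}·(1,j,k) = (1,2,m)`.  In particular every orbit of the action of `G_p` on `C_p`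
contains a function of the form `(1,2,m)` with `m > 2`. -/
theorem orbit_contains_12m (p : ℕ) [NeZero p] (hp : p.Prime)
    (j k : ℕ) (hj : 1 < j) (hjk : j < k) (hk : k ≤ p) :
    ∃ (τ : ℕ) (h : Nat.Coprime τ p) (m : ℕ), ¬ (p ∣ τ) ∧ 2 < m ∧ m ≤ p ∧
      permAct (sigmaPerm (ZMod.unitOfCoprime τ h)) (cubicMRS p j k) = cubicMRS p 2 m := by
  haveI : Fact p.Prime := ⟨hp⟩
  set A : ZMod p := ((j - 1 : ℕ) : ZMod p) with hAdef
  set B : ZMod p := ((k - 1 : ℕ) : ZMod p) with hBdef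
  have hjp : j - 1 < p := by omega
  have hkp : k - 1 < p := by omega
  have hA0 : A ≠ 0 := by
    rw [hAdef, Ne, ZMod.natCast_eq_zero_iff]
    intro hdvd
    have := Nat.le_of_dvd (by omega) hdvd
    omega
  have hB0 : B ≠ 0 := by
    rw [hBdef, Ne, ZMod.natCast_eq_zero_iff]
    intro hdvd
    have := Nat.le_of_dvd (by omega) hdvd
    omega
  have hAB : A ≠ B := by
    rw [hAdef, hBdef]
    intro h
    have := congrArg ZMod.val h
    rw [ZMod.val_cast_of_lt hjp, ZMod.val_cast_of_lt hkp] at this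
    omega
  set U : (ZMod p)ˣ := (Units.mk0 A hA0)⁻¹ with hUdef
  have hUA : (U : ZMod p) * A = 1 := by
    simp [hUdef, inv_mul_cancel₀ hA0]
  set c : ZMod p := (U : ZMod p) * B with hcdef
  have hc0 : c ≠ 0 := by
    simp [hcdef, hB0]
  have hc1 : c ≠ 1 := by
    intro h
    rw [hcdef] at h
    apply hAB
    have h2 : B = A := by
      calc B = A * ((U : ZMod p) * B) := by rw [← mul_assoc, mul_comm A (U : ZMod p), hUA, one_mul]
        _ = A := by rw [h, mul_one]
    exact h2.symm
  have hcv0 : c.val ≠ 0 := fun h => hc0 (by rwa [← ZMod.val_eq_zero])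
  have hval : ((c.val : ℕ) : ZMod p) = c := by simp [ZMod.natCast_val, ZMod.cast_id]
  have hcv1 : c.val ≠ 1 := by
    intro h
    apply hc1
    rw [← hval, h, Nat.cast_one]
  refine ⟨((U : ZMod p)).val, ZMod.val_coe_unit_coprime U, c.val + 1, ?_, ?_, ?_, ?_⟩
  · intro hdvd
    have h1 := (ZMod.val_coe_unit_coprime U).symm
    have : p ∣ Nat.gcd p ((U : ZMod p)).val := Nat.dvd_gcd dvd_rfl hdvd
    have hg : Nat.gcd p ((U : ZMod p)).val = 1 := h1
    rw [hg] at this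
    have := Nat.le_of_dvd one_pos this
    omega
  · omega
  · have := ZMod.val_lt c
    omega
  · have hUeq : ZMod.unitOfCoprime ((U : ZMod p)).val (ZMod.val_coe_unit_coprime U) = U := by
      ext
      simp [ZMod.natCast_val, ZMod.cast_id]
    rw [hUeq]
    funext x
    show (cubicMRS p j k) (fun i => x (sigmaPerm U i)) = _
    have hRHS : ∀ i : ZMod p, (((c.val + 1 - 1 : ℕ)) : ZMod p) = c := by
      intro i
      simp [ZMod.natCast_val, ZMod.cast_id]
    simp only [cubicMRS, sigmaPerm, Equiv.coe_fn_mk, ← hAdef, ← hBdef]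
    have hstep : ∀ i : ZMod p,
        x ((U : ZMod p) * i) * x ((U : ZMod p) * (i + A)) * x ((U : ZMod p) * (i + B))
        = x ((U : ZMod p) * i) * x ((U : ZMod p) * i + 1) * x ((U : ZMod p) * i + c) := by
      intro i
      rw [mul_add, mul_add, hUA, ← hcdef]
    rw [Finset.sum_congr rfl (fun i _ => hstep i)]
    rw [show ((2 - 1 : ℕ) : ZMod p) = 1 by norm_num, hRHS 0]
    exact Equiv.sum_comp (sigmaPerm U) (fun t => x t * x (t + 1) * x (t + c))
end

section
/- Let n > 3. Then σ_{n−1,n}·(1,2,3) = (1,2,3), and the identity σ_{1,n} and σ_{n−1,n} are the only elements of G_n which fix the cubic MRS function (1,2,3). Consequently the orbit of (1,2,3) under the action of G_n has exactly φ(n)/2 elements, where φ is Euler's totient function. -/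
set_option linter.unusedSectionVars false

section OrbitAux
variable (n : ℕ) [NeZero n]

lemma sigmaPerm_apply (u : (ZMod n)ˣ) (i : ZMod n) : sigmaPerm u i = (u : ZMod n) * i := rfl

/-- indicator of `{0,1,2}` -/
def ind : ZMod n → ZMod 2 := fun i => if i = 0 ∨ i = 1 ∨ i = 2 then 1 else 0

lemma permAct_cubic (u : (ZMod n)ˣ) (x : ZMod n → ZMod 2) :
    permAct (sigmaPerm u) (cubicMRS n 2 3) x
      = ∑ i : ZMod n, x i * x (i + (u : ZMod n)) * x (i + 2 * (u : ZMod n)) := by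
  show (∑ i : ZMod n, x (sigmaPerm u i) * x (sigmaPerm u (i + ((2 - 1 : ℕ) : ZMod n)))
      * x (sigmaPerm u (i + ((3 - 1 : ℕ) : ZMod n)))) = _
  refine Fintype.sum_equiv (sigmaPerm u) _ _ (fun i => ?_)
  simp only [sigmaPerm_apply]
  norm_num
  congr 1
  · congr 1
    · congr 1; ring
  · congr 1; ring

lemma cubic_eval (x : ZMod n → ZMod 2) :
    cubicMRS n 2 3 x = ∑ i : ZMod n, x i * x (i + 1) * x (i + 2) := by
  unfold cubicMRS
  norm_num

lemma small_ne (k : ℕ) (hk1 : 0 < k) (hk : k < n) : ((k : ZMod n)) ≠ 0 := by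
  intro h
  have hd : n ∣ k := (ZMod.natCast_eq_zero_iff k n).mp h
  have := Nat.le_of_dvd hk1 hd
  omega

lemma prod_zero_or_one (a b : ZMod n) :
    ind n a * ind n b = 0 ∨ ind n a * ind n b = 1 := by
  unfold ind; split_ifs <;> simp

lemma prod_one_cond {a b : ZMod n} (h : ind n a * ind n b = 1) :
    (a = 0 ∨ a = 1 ∨ a = 2) ∧ (b = 0 ∨ b = 1 ∨ b = 2) := by
  unfold ind at h; split_ifs at h with h1 h2 <;> simp_all

lemma unit_ne_two_mod_four : ∀ u : (ZMod 4)ˣ, (u : ZMod 4) ≠ 2 := by decide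

variable (hn : 3 < n)
include hn

lemma ne01 : (0 : ZMod n) ≠ 1 := by
  intro h; exact small_ne n 1 one_pos (by omega) (by push_cast; linear_combination h.symm)
lemma ne02 : (0 : ZMod n) ≠ 2 := by
  intro h; exact small_ne n 2 two_pos (by omega) (by push_cast; linear_combination h.symm)
lemma ne12 : (1 : ZMod n) ≠ 2 := by
  intro h; exact small_ne n 1 one_pos (by omega) (by push_cast; linear_combination h.symm)

omit hn in
lemma ind_zero : ind n 0 = 1 := by simp [ind]
omit hn in
lemma ind_one : ind n 1 = 1 := by simp [ind]
omit hn in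
lemma ind_two : ind n 2 = 1 := by simp [ind]

lemma ind_three : ind n 3 = 0 := by
  have h0 : (3 : ZMod n) ≠ 0 := by
    exact_mod_cast small_ne n 3 (by norm_num) (by omega)
  have h1 : (3 : ZMod n) ≠ 1 := by
    intro h; exact small_ne n 2 two_pos (by omega) (by push_cast; linear_combination h)
  have h2 : (3 : ZMod n) ≠ 2 := by
    intro h; exact small_ne n 1 one_pos (by omega) (by push_cast; linear_combination h)
  simp [ind, h0, h1, h2]

lemma ind_sum (a b : ZMod n) :
    (∑ i : ZMod n, ind n i * ind n (i + a) * ind n (i + b))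
      = ind n a * ind n b + ind n (1 + a) * ind n (1 + b)
        + ind n (2 + a) * ind n (2 + b) := by
  have h01 := ne01 n hn
  have h02 := ne02 n hn
  have h12 := ne12 n hn
  rw [← Finset.sum_subset (Finset.subset_univ ({0, 1, 2} : Finset (ZMod n)))
    (by
      intro i _ hi
      simp only [Finset.mem_insert, Finset.mem_singleton] at hi
      push_neg at hi
      have : ind n i = 0 := by simp [ind, hi.1, hi.2.1, hi.2.2]
      rw [this, zero_mul, zero_mul])]
  rw [Finset.sum_insert (by simp [h01, h02]), Finset.sum_insert (by simp [h12]),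
    Finset.sum_singleton]
  rw [ind_zero, ind_one, ind_two, zero_add, zero_add, one_mul, one_mul, one_mul]
  ring

lemma stab (u : (ZMod n)ˣ)
    (h : permAct (sigmaPerm u) (cubicMRS n 2 3) = cubicMRS n 2 3) :
    (u : ZMod n) = 1 ∨ (u : ZMod n) = -1 := by
  haveI : Fact (1 < n) := ⟨by omega⟩
  have hu0 : (u : ZMod n) ≠ 0 := Units.ne_zero u
  have hL := congrFun h (ind n)
  rw [permAct_cubic, cubic_eval, ind_sum n hn, ind_sum n hn] at hL
  have e11 : (1 : ZMod n) + 1 = 2 := by norm_num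
  have e12 : (1 : ZMod n) + 2 = 3 := by norm_num
  have e21 : (2 : ZMod n) + 1 = 3 := by norm_num
  rw [e11, e12, e21, ind_three n hn, ind_one, ind_two, mul_zero, zero_mul,
    one_mul, add_zero, add_zero] at hL
  -- hL : P1 + P2 + P3 = 1
  have hone : ind n (u : ZMod n) * ind n (2 * u) = 1 ∨
      ind n (1 + (u : ZMod n)) * ind n (1 + 2 * u) = 1 ∨
      ind n (2 + (u : ZMod n)) * ind n (2 + 2 * u) = 1 := by
    rcases prod_zero_or_one n (u : ZMod n) (2 * u) with p1 | p1 <;>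
      rcases prod_zero_or_one n (1 + (u : ZMod n)) (1 + 2 * u) with p2 | p2 <;>
        rcases prod_zero_or_one n (2 + (u : ZMod n)) (2 + 2 * u) with p3 | p3 <;>
      rw [p1, p2, p3] at hL <;>
      first
        | exact absurd hL (by decide)
        | tauto
  rcases hone with p1 | p2 | p3
  · -- P1 = 1
    obtain ⟨ha, hb⟩ := prod_one_cond n p1
    rcases ha with ha | ha | ha
    · exact absurd ha hu0
    · left; exact ha
    · -- u = 2, 2u = 4 ∈ {0,1,2}
      exfalso
      rcases hb with hb | hb | hb
      · have h4 : ((4:ℕ) : ZMod n) = 0 := by push_cast; linear_combination hb - 2 * ha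
        have hd : n ∣ 4 := (ZMod.natCast_eq_zero_iff 4 n).mp h4
        have hn4 : n = 4 := by
          have := Nat.le_of_dvd (by norm_num) hd
          interval_cases n <;> omega
        subst hn4
        exact unit_ne_two_mod_four u ha
      · have : ((3:ℕ) : ZMod n) = 0 := by push_cast; linear_combination hb - 2 * ha
        exact small_ne n 3 (by norm_num) (by omega) this
      · have : ((2:ℕ) : ZMod n) = 0 := by push_cast; linear_combination hb - 2 * ha
        exact small_ne n 2 two_pos (by omega) this
  · -- P2 = 1
    obtain ⟨ha, _⟩ := prod_one_cond n p2
    rcases ha with ha | ha | ha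
    · right; linear_combination ha
    · exact absurd (by linear_combination ha) hu0
    · left; linear_combination ha
  · -- P3 = 1
    obtain ⟨ha, hb⟩ := prod_one_cond n p3
    rcases ha with ha | ha | ha
    · -- u = -2
      have hu : (u : ZMod n) = -2 := by linear_combination ha
      rcases hb with hb | hb | hb
      · exfalso
        have : ((2:ℕ) : ZMod n) = 0 := by push_cast; linear_combination -hb + 2 * hu
        exact small_ne n 2 two_pos (by omega) this
      · exfalso
        have : ((3:ℕ) : ZMod n) = 0 := by push_cast; linear_combination -hb + 2 * hu
        exact small_ne n 3 (by norm_num) (by omega) this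
      · exfalso
        -- 2 + 2u = 2 with u = -2 gives 4 = 0, so n = 4 and u = 2 : contradiction
        have h4 : ((4:ℕ) : ZMod n) = 0 := by
          push_cast; linear_combination -hb + 2 * hu
        have hd : n ∣ 4 := (ZMod.natCast_eq_zero_iff 4 n).mp h4
        have hn4 : n = 4 := by
          have := Nat.le_of_dvd (by norm_num) hd
          interval_cases n <;> omega
        subst hn4
        have : (u : ZMod 4) = 2 := by rw [hu]; decide
        exact unit_ne_two_mod_four u this
    · -- u = -1
      right; linear_combination ha
    · exact absurd (by linear_combination ha) hu0


omit hn in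
lemma fix_neg_one :
    permAct (sigmaPerm (-1 : (ZMod n)ˣ)) (cubicMRS n 2 3) = cubicMRS n 2 3 := by
  funext x
  rw [permAct_cubic, cubic_eval]
  refine Fintype.sum_equiv (Equiv.subRight (2 : ZMod n)) _ _ (fun i => ?_)
  simp only [Equiv.subRight_apply, Units.val_neg, Units.val_one]
  have a1 : i + (-1 : ZMod n) = i - 1 := by ring
  have a2 : i + 2 * (-1 : ZMod n) = i - 2 := by ring
  have a3 : i - 2 + 1 = i - 1 := by ring
  have a4 : i - 2 + 2 = i := by ring
  rw [a1, a2, a3, a4]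
  ring

omit hn in
lemma fix_one :
    permAct (sigmaPerm (1 : (ZMod n)ˣ)) (cubicMRS n 2 3) = cubicMRS n 2 3 := by
  funext x
  rw [permAct_cubic, cubic_eval]
  simp

omit hn in
lemma permAct_comp (a b : (ZMod n)ˣ) (f : BF n) :
    permAct (sigmaPerm a) (permAct (sigmaPerm b) f) = permAct (sigmaPerm (a * b)) f := by
  funext x
  show f (fun i => x (sigmaPerm a (sigmaPerm b i))) = f (fun i => x (sigmaPerm (a * b) i))
  congr 1
  funext i
  simp only [sigmaPerm_apply, Units.val_mul, mul_assoc]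

lemma key (u v : (ZMod n)ˣ)
    (h : permAct (sigmaPerm u) (cubicMRS n 2 3) = permAct (sigmaPerm v) (cubicMRS n 2 3)) :
    v = u ∨ v = -u := by
  have h2 := congrArg (permAct (sigmaPerm u⁻¹)) h
  rw [permAct_comp, permAct_comp, inv_mul_cancel, fix_one] at h2
  rcases stab n hn _ h2.symm with hc | hc
  · left
    have : (u⁻¹ * v : (ZMod n)ˣ) = 1 := Units.ext (by simpa using hc)
    exact (inv_mul_eq_one.mp this).symm
  · right
    have : (u⁻¹ * v : (ZMod n)ˣ) = -1 := Units.ext (by simpa using hc)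
    have := (inv_mul_eq_iff_eq_mul.mp this)
    rwa [mul_neg_one] at this

omit hn in
lemma key_rev (u v : (ZMod n)ˣ) (h : v = u ∨ v = -u) :
    permAct (sigmaPerm u) (cubicMRS n 2 3) = permAct (sigmaPerm v) (cubicMRS n 2 3) := by
  rcases h with rfl | rfl
  · rfl
  · have : (-u : (ZMod n)ˣ) = u * (-1) := by rw [mul_neg_one]
    rw [this, ← permAct_comp, fix_neg_one]

lemma unit_neg_ne_self (u : (ZMod n)ˣ) : u ≠ -u := by
  intro h
  have h1 : (u : ZMod n) = -u := by exact_mod_cast congrArg Units.val h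
  have h2 : (2 : ZMod n) * u = 0 := by linear_combination h1
  have h3 : ((2 : ZMod n) * u) * (u⁻¹ : (ZMod n)ˣ) = 0 := by rw [h2, zero_mul]
  rw [mul_assoc] at h3
  have h4 : ((u : ZMod n)) * (u⁻¹ : (ZMod n)ˣ) = 1 := u.mul_inv
  rw [h4, mul_one] at h3
  exact small_ne n 2 two_pos (by omega) (by exact_mod_cast h3)

end OrbitAux

/-- For `n > 3`: `σ_{n-1,n}` (i.e. `σ_τ` with `τ ≡ -1 (mod n)`) fixes the cubic MRS
function `(1,2,3)`; the identity and `σ_{n-1,n}` are the only elements of `G_n` fixing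
`(1,2,3)`; and consequently the orbit of `(1,2,3)` has exactly `φ(n)/2` elements. -/
theorem orbit_123 (n : ℕ) [NeZero n] (hn : 3 < n) :
    permAct (sigmaPerm (-1 : (ZMod n)ˣ)) (cubicMRS n 2 3) = cubicMRS n 2 3 ∧
    {u : (ZMod n)ˣ | permAct (sigmaPerm u) (cubicMRS n 2 3) = cubicMRS n 2 3} =
      {1, -1} ∧
    (orbit n (cubicMRS n 2 3)).ncard = Nat.totient n / 2 := by
  classical
  refine ⟨fix_neg_one n, ?_, ?_⟩
  · ext u
    simp only [Set.mem_setOf_eq, Set.mem_insert_iff, Set.mem_singleton_iff]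
    constructor
    · intro h
      rcases stab n hn u h with hc | hc
      · left; exact Units.ext (by simpa using hc)
      · right; exact Units.ext (by simpa using hc)
    · rintro (rfl | rfl)
      · exact fix_one n
      · exact fix_neg_one n
  · have horb : orbit n (cubicMRS n 2 3)
        = ↑(Finset.image (fun u : (ZMod n)ˣ => permAct (sigmaPerm u) (cubicMRS n 2 3))
            Finset.univ) := by
      ext g
      simp only [orbit, Set.mem_setOf_eq, Finset.coe_image, Set.mem_image,
        Finset.mem_coe, Finset.mem_univ, Finset.coe_univ, Set.image_univ,
        Set.mem_range]
      exact ⟨fun ⟨u, hu⟩ => ⟨u, hu.symm⟩, fun ⟨u, hu⟩ => ⟨u, hu.symm⟩⟩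
    rw [horb, Set.ncard_coe_finset]
    have hcard : Fintype.card (ZMod n)ˣ
        = (Finset.image (fun u : (ZMod n)ˣ => permAct (sigmaPerm u) (cubicMRS n 2 3))
            Finset.univ).card * 2 := by
      rw [← Finset.card_univ]
      rw [Finset.card_eq_sum_card_fiberwise
        (f := fun u : (ZMod n)ˣ => permAct (sigmaPerm u) (cubicMRS n 2 3))
        (fun u (_ : u ∈ Finset.univ) => Finset.mem_image_of_mem _ (Finset.mem_univ u))]
      rw [Finset.sum_congr rfl (fun b hb => ?_), Finset.sum_const, smul_eq_mul]
      obtain ⟨v, _, hv⟩ := Finset.mem_image.mp hb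
      have hfib : Finset.univ.filter
          (fun u : (ZMod n)ˣ => permAct (sigmaPerm u) (cubicMRS n 2 3) = b) = {v, -v} := by
        ext w
        simp only [Finset.mem_filter, Finset.mem_univ, true_and, Finset.mem_insert,
          Finset.mem_singleton]
        constructor
        · intro hw
          exact key n hn v w (hv.trans hw.symm)
        · intro hw
          rw [← hv]
          exact (key_rev n v w hw).symm
      rw [hfib, Finset.card_pair (unit_neg_ne_self n hn v)]
    rw [ZMod.card_units_eq_totient] at hcard
    omega
end

section
/- Let n = 3^k with k ≥ 1. Then the short cubic function f₁ = (1, 3^{k−1}+1, 2·3^{k−1}+1) is fixed by every element of G_n, and it is the only cubic MRS function in n variables fixed by every element of G_n; that is, the orbit of f₁ under the action of G_n has size 1, and every other orbit has size greater than 1. -/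
/-! ### Auxiliary machinery -/

/-- The cubic MRS function with 0-indexed offsets `a`, `b`. -/
def gg (n : ℕ) [NeZero n] (a b : ZMod n) : BF n :=
  fun x => ∑ i : ZMod n, x i * x (i + a) * x (i + b)

lemma sum_ind (n : ℕ) [NeZero n] (p q r : ZMod n → Prop)
    [DecidablePred p] [DecidablePred q] [DecidablePred r] :
    ∑ i : ZMod n, (if p i then (1:ZMod 2) else 0) * (if q i then 1 else 0) *
        (if r i then 1 else 0)
      = ((Finset.univ.filter fun i => p i ∧ q i ∧ r i).card : ZMod 2) := by
  rw [← Finset.sum_boole]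
  exact Finset.sum_congr rfl fun i _ => by split_ifs <;> simp_all

lemma permAct_gg (n : ℕ) [NeZero n] (u : (ZMod n)ˣ) (a b : ZMod n) :
    permAct (sigmaPerm u) (gg n a b) = gg n ((u:ZMod n)*a) ((u:ZMod n)*b) := by
  funext x
  show ∑ i : ZMod n, x ((u:ZMod n)*i) * x ((u:ZMod n)*(i+a)) * x ((u:ZMod n)*(i+b))
      = ∑ i : ZMod n, x i * x (i + (u:ZMod n)*a) * x (i + (u:ZMod n)*b)
  rw [← Equiv.sum_comp (sigmaPerm u)
    (fun i => x i * x (i + (u:ZMod n)*a) * x (i + (u:ZMod n)*b))]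
  exact Finset.sum_congr rfl fun i _ => by simp [sigmaPerm, mul_add]

lemma gg_comm (n : ℕ) [NeZero n] (a b : ZMod n) : gg n a b = gg n b a := by
  funext x
  exact Finset.sum_congr rfl fun i _ => by ring

lemma cubicMRS_eq_gg (n : ℕ) [NeZero n] (j k : ℕ) :
    cubicMRS n j k = gg n ((j-1 : ℕ) : ZMod n) ((k-1 : ℕ) : ZMod n) := rfl

lemma unit_cancel {n : ℕ} [NeZero n] (m : ℕ) (hm : Nat.Coprime m n) (c : ZMod n)
    (h : (m : ZMod n) * c = 0) : c = 0 := by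
  have hu : IsUnit (m : ZMod n) := (ZMod.isUnit_iff_coprime m n).mpr hm
  obtain ⟨v, hv⟩ := hu
  calc c = ((v⁻¹ : (ZMod n)ˣ) : ZMod n) * ((m : ZMod n) * c) := by
        rw [← mul_assoc, ← hv, Units.inv_mul, one_mul]
    _ = 0 := by rw [h, mul_zero]

lemma t_ne (k n : ℕ) [NeZero n] (hk : 1 ≤ k) (hn : n = 3 ^ k) :
    ((3^(k-1) : ℕ) : ZMod n) ≠ 0 := by
  intro h
  rw [ZMod.natCast_eq_zero_iff, hn] at h
  have h1 := Nat.le_of_dvd (by positivity) h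
  have h2 := pow_le_pow_iff_right₀ (a := 3) (by norm_num) |>.mp h1
  omega

lemma three_t (k n : ℕ) [NeZero n] (hk : 1 ≤ k) (hn : n = 3 ^ k) :
    (3 : ZMod n) * ((3^(k-1) : ℕ) : ZMod n) = 0 := by
  have h : (3 : ZMod n) * ((3^(k-1) : ℕ) : ZMod n) = ((3 * 3^(k-1) : ℕ) : ZMod n) := by
    push_cast; ring
  rw [h]
  have h2 : 3 * 3^(k-1) = 3^k := by rw [← pow_succ']; congr 1; omega
  rw [h2, ← hn, ZMod.natCast_self]

lemma ker3 (k n : ℕ) [NeZero n] (hk : 1 ≤ k) (hn : n = 3 ^ k) (c : ZMod n) (hc : c ≠ 0)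
    (h3 : (3 : ZMod n) * c = 0) :
    c = ((3^(k-1) : ℕ) : ZMod n) ∨ c = 2 * ((3^(k-1) : ℕ) : ZMod n) := by
  have hce : ((c.val : ℕ) : ZMod n) = c := by simp [ZMod.natCast_val, ZMod.cast_id]
  have h3' : ((3 * c.val : ℕ) : ZMod n) = 0 := by push_cast [hce]; linear_combination h3
  rw [ZMod.natCast_eq_zero_iff] at h3'
  have h3'' : 3^k ∣ 3 * c.val := by rw [← hn]; exact h3'
  have hdvd : 3^(k-1) ∣ c.val := by
    have h4 : 3^(k-1+1) ∣ 3 * c.val := by rw [show k-1+1 = k by omega]; exact h3''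
    rw [pow_succ, mul_comm (3^(k-1)) 3] at h4
    exact (Nat.mul_dvd_mul_iff_left (by norm_num : 0 < 3)).mp h4
  obtain ⟨m, hm⟩ := hdvd
  have hlt : c.val < 3^k := hn ▸ ZMod.val_lt c
  have hmlt : m < 3 := by
    by_contra h
    push_neg at h
    have h5 : 3^(k-1) * 3 ≤ 3^(k-1) * m := Nat.mul_le_mul_left _ h
    rw [← pow_succ, show k-1+1 = k by omega] at h5
    omega
  have hm0 : m ≠ 0 := by
    rintro rfl
    exact hc (by rw [← hce, hm, mul_zero, Nat.cast_zero])
  interval_cases m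
  · exact absurd rfl hm0
  · left; rw [← hce, hm]; push_cast; ring
  · right; rw [← hce, hm]; push_cast; ring

/-- For `n = 3^k`, `k ≥ 1`: the short cubic function
`f₁ = (1, 3^{k-1}+1, 2·3^{k-1}+1)` is fixed by every element of `G_n`, and it is the
only cubic MRS function in `n` variables fixed by every element of `G_n`; equivalently,
its orbit has size 1 and every other orbit has size greater than 1. -/
theorem short_cubic_unique_fixed (k : ℕ) (hk : 1 ≤ k) (n : ℕ) (hn : n = 3 ^ k)
    [NeZero n] :
    (∀ u : (ZMod n)ˣ,
      permAct (sigmaPerm u) (cubicMRS n (3 ^ (k - 1) + 1) (2 * 3 ^ (k - 1) + 1)) =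
        cubicMRS n (3 ^ (k - 1) + 1) (2 * 3 ^ (k - 1) + 1)) ∧
    (∀ f ∈ cubicSet n, (∀ u : (ZMod n)ˣ, permAct (sigmaPerm u) f = f) →
      f = cubicMRS n (3 ^ (k - 1) + 1) (2 * 3 ^ (k - 1) + 1)) ∧
    (orbit n (cubicMRS n (3 ^ (k - 1) + 1) (2 * 3 ^ (k - 1) + 1))).ncard = 1 ∧
    (∀ f ∈ cubicSet n, f ≠ cubicMRS n (3 ^ (k - 1) + 1) (2 * 3 ^ (k - 1) + 1) →
      1 < (orbit n f).ncard) := by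
  set t : ZMod n := ((3^(k-1) : ℕ) : ZMod n) with ht
  have ht0 : t ≠ 0 := t_ne k n hk hn
  have h3t : (3 : ZMod n) * t = 0 := three_t k n hk hn
  have hker : ∀ c : ZMod n, c ≠ 0 → (3 : ZMod n) * c = 0 → c = t ∨ c = 2*t :=
    fun c => ker3 k n hk hn c
  -- identify f₁ with gg n t (2t)
  have hf1 : cubicMRS n (3 ^ (k - 1) + 1) (2 * 3 ^ (k - 1) + 1) = gg n t (2*t) := by
    rw [cubicMRS_eq_gg, Nat.add_sub_cancel, Nat.add_sub_cancel]
    have h2 : ((2 * 3^(k-1) : ℕ) : ZMod n) = 2 * t := by rw [ht]; push_cast; ring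
    rw [h2]
  -- Part 1
  have part1 : ∀ u : (ZMod n)ˣ, permAct (sigmaPerm u) (gg n t (2*t)) = gg n t (2*t) := by
    intro u
    rw [permAct_gg]
    have hut0 : (u : ZMod n) * t ≠ 0 := fun h => ht0 ((Units.mul_right_eq_zero u).mp h)
    have h3ut : (3 : ZMod n) * ((u:ZMod n) * t) = 0 := by
      have hh : (3 : ZMod n) * ((u:ZMod n) * t) = (u:ZMod n) * ((3 : ZMod n) * t) := by ring
      rw [hh, h3t, mul_zero]
    have h2 : (u : ZMod n) * (2*t) = 2 * ((u:ZMod n) * t) := by ring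
    rcases hker _ hut0 h3ut with hcase | hcase
    · rw [h2, hcase]
    · rw [h2, hcase]
      have h4 : 2 * (2*t) = t := by linear_combination h3t
      rw [h4, gg_comm]
  -- Part 2
  have part2 : ∀ f ∈ cubicSet n, (∀ u : (ZMod n)ˣ, permAct (sigmaPerm u) f = f) →
      f = cubicMRS n (3 ^ (k - 1) + 1) (2 * 3 ^ (k - 1) + 1) := by
    rintro f ⟨j, k', hj, hjk, hkn, rfl⟩ hfix
    rw [cubicMRS_eq_gg n j k'] at hfix ⊢
    set a : ZMod n := ((j - 1 : ℕ) : ZMod n) with hadef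
    set b : ZMod n := ((k' - 1 : ℕ) : ZMod n) with hbdef
    have hn3 : 3 ≤ n := by
      rw [hn]
      calc 3 = 3^1 := by norm_num
        _ ≤ 3^k := Nat.pow_le_pow_right (by norm_num) hk
    have hjn : j - 1 < n := by omega
    have hkn' : k' - 1 < n := by omega
    have ha0 : a ≠ 0 := by
      rw [hadef]
      intro h
      rw [ZMod.natCast_eq_zero_iff] at h
      have := Nat.le_of_dvd (by omega) h
      omega
    have hb0 : b ≠ 0 := by
      rw [hbdef]
      intro h
      rw [ZMod.natCast_eq_zero_iff] at h
      have := Nat.le_of_dvd (by omega) h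
      omega
    have hab : a ≠ b := by
      rw [hadef, hbdef]
      intro h
      have h2 := congrArg ZMod.val h
      rw [ZMod.val_cast_of_lt hjn, ZMod.val_cast_of_lt hkn'] at h2
      omega
    suffices hcl : (a = t ∧ b = 2*t) ∨ (a = 2*t ∧ b = t) by
      rw [hf1]
      rcases hcl with ⟨h1, h2⟩ | ⟨h1, h2⟩
      · rw [h1, h2]
      · rw [h1, h2, gg_comm]
    by_contra Hne
    have hco : ∀ m : ℕ, Nat.Coprime m 3 → ∀ c : ZMod n, (m : ZMod n) * c = 0 → c = 0 :=
      fun m hm c h => unit_cancel m (by rw [hn]; exact Nat.Coprime.pow_right k hm) c h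
    have c2 : ∀ c : ZMod n, (2:ZMod n) * c = 0 → c = 0 :=
      fun c h => hco 2 (by decide) c (by push_cast; exact h)
    have c4 : ∀ c : ZMod n, (4:ZMod n) * c = 0 → c = 0 :=
      fun c h => hco 4 (by decide) c (by push_cast; exact h)
    have c7 : ∀ c : ZMod n, (7:ZMod n) * c = 0 → c = 0 :=
      fun c h => hco 7 (by decide) c (by push_cast; exact h)
    have key : ∀ c d : ZMod n, c ≠ 0 → (3:ZMod n)*c = 0 → (d = 2*c ∨ d = -c) →
        (c = t ∧ d = 2*t) ∨ (c = 2*t ∧ d = t) := by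
      intro c d hc h3 hd
      rcases hker c hc h3 with h | h
      · refine Or.inl ⟨h, ?_⟩
        rcases hd with hd | hd
        · rw [hd, h]
        · rw [hd, h]; linear_combination -h3t
      · refine Or.inr ⟨h, ?_⟩
        rcases hd with hd | hd
        · rw [hd, h]; linear_combination h3t
        · rw [hd, h]; linear_combination -h3t
    have keyA : (3:ZMod n)*a = 0 → (b = 2*a ∨ b = -a) → False :=
      fun h3a hb => Hne (key a b ha0 h3a hb)
    have keyB : (3:ZMod n)*b = 0 → (a = 2*b ∨ a = -b) → False := by
      intro h3b ha
      rcases key b a hb0 h3b ha with ⟨h1, h2⟩ | ⟨h1, h2⟩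
      · exact Hne (Or.inr ⟨h2, h1⟩)
      · exact Hne (Or.inl ⟨h2, h1⟩)
    have hcop2n : Nat.Coprime 2 n := by
      rw [hn]; exact Nat.Coprime.pow_right k (by decide)
    have hg : gg n (2*a) (2*b) = gg n a b := by
      have h := hfix (ZMod.unitOfCoprime 2 hcop2n)
      rw [permAct_gg, ZMod.coe_unitOfCoprime] at h
      rw [show ((2:ℕ) : ZMod n) = (2:ZMod n) from Nat.cast_ofNat] at h
      exact h
    set x₀ : ZMod n → ZMod 2 := fun i => if i = 0 ∨ i = a ∨ i = b then 1 else 0 with hx₀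
    have eval : ∀ c d : ZMod n, gg n c d x₀ =
        ((Finset.univ.filter fun i : ZMod n => (i = 0 ∨ i = a ∨ i = b) ∧
          (i + c = 0 ∨ i + c = a ∨ i + c = b) ∧
          (i + d = 0 ∨ i + d = a ∨ i + d = b)).card : ZMod 2) :=
      fun c d => sum_ind n (fun i => i = 0 ∨ i = a ∨ i = b)
        (fun i => i + c = 0 ∨ i + c = a ∨ i + c = b)
        (fun i => i + d = 0 ∨ i + d = a ∨ i + d = b)
    have hx := congrFun hg x₀
    rw [eval, eval] at hx
    have hcard1 : (Finset.univ.filter fun i : ZMod n => (i = 0 ∨ i = a ∨ i = b) ∧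
          (i + a = 0 ∨ i + a = a ∨ i + a = b) ∧
          (i + b = 0 ∨ i + b = a ∨ i + b = b)).card = 1 := by
      rw [Finset.card_eq_one]
      refine ⟨0, ?_⟩
      ext i
      simp only [Finset.mem_filter, Finset.mem_univ, true_and, Finset.mem_singleton]
      constructor
      · rintro ⟨hi | hi | hi, hia, hib⟩
        · exact hi
        · exfalso
          subst hi
          rcases hia with h1 | h1 | h1
          · exact ha0 (c2 a (by linear_combination h1))
          · exact ha0 (by linear_combination h1)
          · rcases hib with h2 | h2 | h2
            · exact keyA (by linear_combination h1 + h2) (Or.inl (by linear_combination -h1))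
            · exact hb0 (by linear_combination h2)
            · exact ha0 (by linear_combination h2)
        · exfalso
          subst hi
          rcases hib with h2 | h2 | h2
          · exact hb0 (c2 b (by linear_combination h2))
          · rcases hia with h1 | h1 | h1
            · exact keyB (by linear_combination h1 + h2) (Or.inl (by linear_combination -h2))
            · exact hb0 (by linear_combination h1)
            · exact ha0 (by linear_combination h1)
          · exact hb0 (by linear_combination h2)
      · rintro rfl
        exact ⟨Or.inl rfl, Or.inr (Or.inl (zero_add a)), Or.inr (Or.inr (zero_add b))⟩
    have hcard2 : (Finset.univ.filter fun i : ZMod n => (i = 0 ∨ i = a ∨ i = b) ∧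
          (i + 2*a = 0 ∨ i + 2*a = a ∨ i + 2*a = b) ∧
          (i + 2*b = 0 ∨ i + 2*b = a ∨ i + 2*b = b)).card = 0 := by
      rw [Finset.card_eq_zero]
      ext i
      simp only [Finset.mem_filter, Finset.mem_univ, true_and, Finset.notMem_empty,
        iff_false, not_and]
      rintro (hi | hi | hi) h1s h2s
      · subst hi
        rcases h1s with h1 | h1 | h1
        · exact ha0 (c2 a (by linear_combination h1))
        · exact ha0 (by linear_combination h1)
        · rcases h2s with h2 | h2 | h2
          · exact hb0 (c2 b (by linear_combination h2))
          · exact keyA (by linear_combination 2*h1 + h2) (Or.inl (by linear_combination -h1))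
          · exact hb0 (by linear_combination h2)
      · subst hi
        rcases h1s with h1 | h1 | h1
        · have h3a : (3:ZMod n)*a = 0 := by linear_combination h1
          rcases h2s with h2 | h2 | h2
          · have h6 : (2:ZMod n) * ((3:ZMod n)*b) = 0 := by linear_combination 3*h2 - h3a
            have h3b := c2 _ h6
            exact hab (by linear_combination h2 - h3b)
          · exact hb0 (c2 b (by linear_combination h2))
          · exact keyA h3a (Or.inr (by linear_combination h2))
        · exact ha0 (c2 a (by linear_combination h1))
        · rcases h2s with h2 | h2 | h2
          · exact ha0 (c7 a (by linear_combination 2*h1 + h2))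
          · exact hb0 (c2 b (by linear_combination h2))
          · exact ha0 (c4 a (by linear_combination h1 + h2))
      · subst hi
        rcases h2s with h2 | h2 | h2
        · have h3b : (3:ZMod n)*b = 0 := by linear_combination h2
          rcases h1s with h1 | h1 | h1
          · have h6 : (2:ZMod n) * ((3:ZMod n)*a) = 0 := by linear_combination 3*h1 - h3b
            have h3a := c2 _ h6
            exact hab (by linear_combination h3a - h1)
          · exact keyB h3b (Or.inr (by linear_combination h1))
          · exact ha0 (c2 a (by linear_combination h1))
        · rcases h1s with h1 | h1 | h1
          · exact hb0 (c7 b (by linear_combination h1 + 2*h2))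
          · exact hb0 (c4 b (by linear_combination h2 + h1))
          · exact ha0 (c2 a (by linear_combination h1))
        · exact hb0 (c2 b (by linear_combination h2))
    rw [hcard1, hcard2] at hx
    simp at hx
  refine ⟨fun u => by rw [hf1]; exact part1 u, part2, ?_, ?_⟩
  -- Part 3
  · have horb : orbit n (cubicMRS n (3 ^ (k - 1) + 1) (2 * 3 ^ (k - 1) + 1))
        = {cubicMRS n (3 ^ (k - 1) + 1) (2 * 3 ^ (k - 1) + 1)} := by
      ext g
      constructor
      · rintro ⟨u, rfl⟩
        simp only [Set.mem_singleton_iff]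
        rw [hf1, part1 u]
      · rintro rfl
        exact ⟨1, by rw [hf1, part1 1]⟩
    rw [horb, Set.ncard_singleton]
  -- Part 4
  · intro f hf hne
    have hone : permAct (sigmaPerm (1 : (ZMod n)ˣ)) f = f := by
      funext x
      show f (fun i => x ((1 : (ZMod n)ˣ) * i)) = f x
      simp
    have : ¬ (∀ u : (ZMod n)ˣ, permAct (sigmaPerm u) f = f) := fun h => hne (part2 f hf h)
    push_neg at this
    obtain ⟨u, hu⟩ := this
    rw [Set.one_lt_ncard (Set.toFinite _)]
    exact ⟨permAct (sigmaPerm u) f, ⟨u, rfl⟩, f, ⟨1, hone.symm⟩, hu⟩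
end

section
/- Let n = 3^k with k ≥ 1. Then no orbit of the action of G_n on the set C_n of cubic MRS functions in n variables has size exactly 2. -/
set_option linter.unusedSectionVars false

section Helpers

variable {n : ℕ} [NeZero n]

/-- cubic function with offsets A B. -/
def Fo (n : ℕ) [NeZero n] (A B : ZMod n) : BF n :=
  fun x => ∑ i : ZMod n, x i * x (i + A) * x (i + B)

lemma cubicMRS_eq_Fo (j k : ℕ) :
    cubicMRS n j k = Fo n ((j - 1 : ℕ) : ZMod n) ((k - 1 : ℕ) : ZMod n) := rfl

lemma Fo_swap (A B : ZMod n) : Fo n A B = Fo n B A := by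
  funext x
  exact Finset.sum_congr rfl fun i _ => by ring

lemma permAct_Fo (u : (ZMod n)ˣ) (A B : ZMod n) :
    permAct (sigmaPerm u) (Fo n A B) = Fo n ((u : ZMod n) * A) ((u : ZMod n) * B) := by
  funext x
  show ∑ i : ZMod n, _ = _
  exact Fintype.sum_equiv (sigmaPerm u)
    (fun i => x ((u : ZMod n) * i) * x ((u : ZMod n) * (i + A)) * x ((u : ZMod n) * (i + B)))
    (fun i => x i * x (i + (u : ZMod n) * A) * x (i + (u : ZMod n) * B))
    (fun i => by simp [sigmaPerm, mul_add])

/-- sum-of-products form over a finset of offsets -/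
def Gd (n : ℕ) [NeZero n] (S : Finset (ZMod n)) : BF n :=
  fun x => ∑ i : ZMod n, ∏ u ∈ S, x (i + u)

lemma Fo_eq_Gd {A B : ZMod n} (hA : A ≠ 0) (hB : B ≠ 0) (hAB : A ≠ B) :
    Fo n A B = Gd n {0, A, B} := by
  funext x
  refine Finset.sum_congr rfl fun i _ => ?_
  rw [Finset.prod_insert (by simp [hA.symm, hB.symm]),
    Finset.prod_insert (by simp [hAB]), Finset.prod_singleton]
  rw [add_zero, mul_assoc]

lemma Gd_translate (t : ZMod n) (S : Finset (ZMod n)) :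
    Gd n (S.image (· + t)) = Gd n S := by
  funext x
  show ∑ i : ZMod n, _ = ∑ i : ZMod n, _
  refine Fintype.sum_equiv (Equiv.addRight t) _ _ fun i => ?_
  rw [Finset.prod_image (by intro a _ b _ h; exact add_right_cancel h)]
  refine Finset.prod_congr rfl fun u _ => ?_
  simp [Equiv.addRight]
  ring_nf

end Helpers

section Counting

variable {n : ℕ} [NeZero n]

lemma Gd_indicator (S U : Finset (ZMod n)) (hcard : S.card = U.card) :
    Gd n S (fun z => if z ∈ U then 1 else 0)
      = ((Finset.univ.filter (fun i : ZMod n => S.image (· + i) = U)).card : ZMod 2) := by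
  unfold Gd
  rw [← Finset.sum_boole]
  refine Finset.sum_congr rfl fun i _ => ?_
  rw [Finset.prod_boole]
  congr 1
  simp only [eq_iff_iff]
  constructor
  · intro h
    apply Finset.eq_of_subset_of_card_le
    · intro z hz
      simp only [Finset.mem_image] at hz
      obtain ⟨u, hu, rfl⟩ := hz
      simpa [add_comm] using h u hu
    · rw [Finset.card_image_of_injective _ (add_left_injective i), hcard]
  · intro h u hu
    have : u + i ∈ U := by
      rw [← h]; exact Finset.mem_image_of_mem _ hu
    simpa [add_comm] using this

lemma odd_stab_card (hodd : ¬ (2 ∣ n)) (U : Finset (ZMod n)) :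
    ((Finset.univ.filter (fun i : ZMod n => U.image (· + i) = U)).card : ZMod 2) = 1 := by
  have h2 : ∀ x : ZMod n, x = -x → x = 0 := by
    intro x hx
    have h2u : IsUnit ((2 : ℕ) : ZMod n) := by
      rw [ZMod.isUnit_iff_coprime]
      exact Nat.Prime.coprime_iff_not_dvd Nat.prime_two |>.mpr hodd
    rw [Nat.cast_ofNat] at h2u
    have : (2 : ZMod n) * x = 0 := by linear_combination hx
    exact (h2u.mul_right_eq_zero).mp this
  set s := Finset.univ.filter (fun i : ZMod n => U.image (· + i) = U) with hs
  have h0 : (0 : ZMod n) ∈ s := by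
    have hid : (fun x : ZMod n => x + 0) = id := by funext z; simp
    simp only [hs, Finset.mem_filter, Finset.mem_univ, true_and, hid, Finset.image_id]
  have hneg : ∀ i : ZMod n, i ∈ s → -i ∈ s := by
    intro i hi
    simp only [hs, Finset.mem_filter, Finset.mem_univ, true_and] at hi ⊢
    have := congrArg (Finset.image (· + (-i))) hi
    rw [Finset.image_image] at this
    simpa using this.symm
  have key : ∑ i ∈ s.erase 0, (1 : ZMod 2) = 0 := by
    refine Finset.sum_involution (fun i _ => -i) (fun i _ => by decide) ?_ ?_ ?_
    · intro i hi _
      intro h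
      have : i = 0 := h2 i h.symm
      exact (Finset.mem_erase.mp hi).1 this
    · intro i hi
      rw [Finset.mem_erase] at hi ⊢
      refine ⟨fun h => hi.1 (by simpa using congrArg Neg.neg h), hneg i hi.2⟩
    · intro i hi; simp
  have : ((s.card : ℕ) : ZMod 2) = ∑ i ∈ s, (1 : ZMod 2) := by simp
  rw [this, ← Finset.add_sum_erase _ _ h0, key]
  simp

lemma triple_card {A B : ZMod n} (hA : A ≠ 0) (hB : B ≠ 0) (hAB : A ≠ B) :
    ({0, A, B} : Finset (ZMod n)).card = 3 := by
  rw [Finset.card_insert_of_notMem (by simp [hA.symm, hB.symm]),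
    Finset.card_insert_of_notMem (by simp [hAB]), Finset.card_singleton]

lemma translate_of_Fo_eq (hodd : ¬ (2 ∣ n)) {A B A' B' : ZMod n}
    (hA : A ≠ 0) (hB : B ≠ 0) (hAB : A ≠ B)
    (hA' : A' ≠ 0) (hB' : B' ≠ 0) (hAB' : A' ≠ B')
    (h : Fo n A B = Fo n A' B') :
    ∃ t : ZMod n, ({0, A, B} : Finset (ZMod n)).image (· + t) = {0, A', B'} := by
  have hc : ({0, A, B} : Finset (ZMod n)).card = ({0, A', B'} : Finset (ZMod n)).card := by
    rw [triple_card hA hB hAB, triple_card hA' hB' hAB']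
  have h' : Gd n {0, A, B} = Gd n {0, A', B'} := by
    rw [← Fo_eq_Gd hA hB hAB, ← Fo_eq_Gd hA' hB' hAB']; exact h
  have h1 := congrFun h'
    (fun z => if z ∈ ({0, A', B'} : Finset (ZMod n)) then 1 else 0)
  rw [Gd_indicator _ _ hc, Gd_indicator _ _ rfl, odd_stab_card hodd] at h1
  by_contra hcon
  push_neg at hcon
  have : (Finset.univ.filter
      (fun i : ZMod n => ({0, A, B} : Finset (ZMod n)).image (· + i) = {0, A', B'})) = ∅ := by
    refine Finset.eq_empty_of_forall_notMem fun i hi => ?_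
    rw [Finset.mem_filter] at hi
    exact hcon i hi.2
  rw [this] at h1
  simp at h1

end Counting

section MainHelpers

variable {n : ℕ} [NeZero n]

lemma cancel_coprime (c : ℕ) (h : Nat.Coprime c n) (x : ZMod n)
    (hx : (c : ZMod n) * x = 0) : x = 0 := by
  have hu := (ZMod.unitOfCoprime c h).isUnit
  rw [ZMod.coe_unitOfCoprime] at hu
  exact hu.mul_right_eq_zero.mp hx

lemma ker3_s16 (m : ℕ) (hm : n = 3 * m) (x : ZMod n) (hx : (3 : ZMod n) * x = 0) :
    x = 0 ∨ x = ((m : ℕ) : ZMod n) ∨ x = ((m * 2 : ℕ) : ZMod n) := by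
  have hmv : ((3 * x.val : ℕ) : ZMod n) = 0 := by
    push_cast [ZMod.natCast_zmod_val]
    exact hx
  have hdvd : n ∣ 3 * x.val := (ZMod.natCast_eq_zero_iff _ _).mp hmv
  have hdvd2 : 3 * m ∣ 3 * x.val := by rw [← hm]; exact hdvd
  have hdvd' : m ∣ x.val := (Nat.mul_dvd_mul_iff_left (by norm_num : 0 < 3)).mp hdvd2
  obtain ⟨c, hc⟩ := hdvd'
  have hlt : m * c < 3 * m := by rw [← hc, ← hm]; exact ZMod.val_lt x
  have hc3 : c < 3 := by
    by_contra hge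
    push_neg at hge
    have : 3 * m ≤ m * c := by
      calc 3 * m = m * 3 := by ring
      _ ≤ m * c := Nat.mul_le_mul_left m hge
    omega
  have hxv : x = ((x.val : ℕ) : ZMod n) := (ZMod.natCast_zmod_val x).symm
  interval_cases c
  · left; rw [hxv, hc]; simp
  · right; left; rw [hxv, hc]; norm_num
  · right; right; rw [hxv, hc]

lemma translate_scale (u t A B A' B' : ZMod n)
    (h : ({0, A, B} : Finset (ZMod n)).image (· + t) = {0, A', B'}) :
    ({0, u * A, u * B} : Finset (ZMod n)).image (· + u * t) = {0, u * A', u * B'} := by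
  have h2 := congrArg (Finset.image (fun x => u * x)) h
  rw [Finset.image_image] at h2
  have e1 : ((fun x => u * x) ∘ (· + t)) = ((· + u * t) ∘ (fun x => u * x)) := by
    funext x; simp [Function.comp, mul_add]
  rw [e1, ← Finset.image_image] at h2
  have e2 : ∀ X Y : ZMod n, ({0, X, Y} : Finset (ZMod n)).image (fun x => u * x)
      = {0, u * X, u * Y} := by
    intro X Y
    rw [Finset.image_insert, Finset.image_insert, Finset.image_singleton, mul_zero]
  rw [e2, e2] at h2
  exact h2

end MainHelpers


/-- For `n = 3^k`, `k ≥ 1`, no orbit of the action of `G_n` on the set `C_n` of cubic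
MRS functions in `n` variables has size exactly 2. -/
theorem no_orbit_of_size_two (k : ℕ) (hk : 1 ≤ k) (n : ℕ) (hn : n = 3 ^ k)
    [NeZero n] :
    ∀ S ∈ orbitsOn n, S.ncard ≠ 2 := by
  subst hn
  set N := 3 ^ k with hN
  intro S hS h2
  obtain ⟨f, hfC, rfl⟩ := hS
  obtain ⟨j, kk, hj, hjk, hkn, rfl⟩ := hfC
  -- basic numerics
  have h3k : 0 < N := pow_pos (by norm_num) k
  have hodd : ¬ (2 ∣ N) := by
    have hc : Nat.Coprime 2 N := Nat.Coprime.pow_right k (by decide)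
    exact (Nat.Prime.coprime_iff_not_dvd Nat.prime_two).mp hc
  -- offsets
  set A : ZMod N := ((j - 1 : ℕ) : ZMod N) with hAdef
  set B : ZMod N := ((kk - 1 : ℕ) : ZMod N) with hBdef
  have hj1 : 0 < j - 1 := by omega
  have hk1 : j - 1 < kk - 1 := by omega
  have hkN : kk - 1 < N := by omega
  have hA : A ≠ 0 := by
    rw [hAdef, Ne, ZMod.natCast_eq_zero_iff]
    intro hd
    have := Nat.le_of_dvd hj1 hd
    omega
  have hB : B ≠ 0 := by
    rw [hBdef, Ne, ZMod.natCast_eq_zero_iff]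
    intro hd
    have := Nat.le_of_dvd (by omega) hd
    omega
  have hAB : A ≠ B := by
    rw [hAdef, hBdef]
    intro h
    have := congrArg ZMod.val h
    rw [ZMod.val_cast_of_lt (by omega), ZMod.val_cast_of_lt hkN] at this
    omega
  -- cancellation helpers
  have hcan : ∀ c : ℕ, Nat.Coprime c 3 → ∀ x : ZMod N, ((c : ℕ) : ZMod N) * x = 0 → x = 0 := by
    intro c hc x hx
    exact cancel_coprime c (Nat.Coprime.pow_right k hc) x hx
  have h5 : ∀ x : ZMod N, (5 : ZMod N) * x = 0 → x = 0 := by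
    intro x hx
    refine hcan 5 (by decide) x ?_
    push_cast
    exact hx
  have h7 : ∀ x : ZMod N, (7 : ZMod N) * x = 0 → x = 0 := by
    intro x hx
    refine hcan 7 (by decide) x ?_
    push_cast
    exact hx
  -- units 2 and 4
  have hcop2 : Nat.Coprime 2 N := Nat.Coprime.pow_right k (by decide)
  have hcop4 : Nat.Coprime 4 N := Nat.Coprime.pow_right k (by decide)
  set u2 : (ZMod N)ˣ := ZMod.unitOfCoprime 2 hcop2 with hu2def
  have hu2 : (u2 : ZMod N) = 2 := by
    rw [hu2def, ZMod.coe_unitOfCoprime]; push_cast; ring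
  have hu4 : ((u2 * u2 : (ZMod N)ˣ) : ZMod N) = 4 := by
    rw [Units.val_mul, hu2]; ring
  -- distinctness under unit multiplication
  have hdist : ∀ u : (ZMod N)ˣ, (u : ZMod N) * A ≠ 0 ∧ (u : ZMod N) * B ≠ 0 ∧
      (u : ZMod N) * A ≠ (u : ZMod N) * B := by
    intro u
    refine ⟨fun h => hA (u.isUnit.mul_right_eq_zero.mp h),
      fun h => hB (u.isUnit.mul_right_eq_zero.mp h),
      fun h => hAB (u.isUnit.mul_left_cancel h)⟩
  -- stabilizer predicate
  set P : (ZMod N)ˣ → Prop :=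
    fun u => Fo N ((u : ZMod N) * A) ((u : ZMod N) * B) = Fo N A B with hPdef
  have toSt : ∀ u : (ZMod N)ˣ, P u →
      ∃ t : ZMod N, ({0, A, B} : Finset (ZMod N)).image (· + t)
        = {0, (u : ZMod N) * A, (u : ZMod N) * B} := by
    intro u hu
    obtain ⟨d1, d2, d3⟩ := hdist u
    exact translate_of_Fo_eq hodd hA hB hAB d1 d2 d3 hu.symm
  have ofSt : ∀ u : (ZMod N)ˣ,
      (∃ t : ZMod N, ({0, A, B} : Finset (ZMod N)).image (· + t)
        = {0, (u : ZMod N) * A, (u : ZMod N) * B}) → P u := by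
    intro u ⟨t, ht⟩
    obtain ⟨d1, d2, d3⟩ := hdist u
    show Fo N ((u : ZMod N) * A) ((u : ZMod N) * B) = Fo N A B
    rw [Fo_eq_Gd d1 d2 d3, Fo_eq_Gd hA hB hAB, ← ht, Gd_translate]
  have Pmul : ∀ u v : (ZMod N)ˣ, P u → P v → P (u * v) := by
    intro u v hu hv
    obtain ⟨t, ht⟩ := toSt u hu
    obtain ⟨s, hs⟩ := toSt v hv
    apply ofSt
    refine ⟨s + (v : ZMod N) * t, ?_⟩
    have h2' := translate_scale (v : ZMod N) t A B _ _ ht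
    rw [← hs, Finset.image_image] at h2'
    have e1 : ((· + (v : ZMod N) * t) ∘ (· + s)) = (· + (s + (v : ZMod N) * t)) := by
      funext x; simp [Function.comp, add_assoc]
    rw [e1] at h2'
    have e2 : (v : ZMod N) * ((u : ZMod N) * A) = ((u * v : (ZMod N)ˣ) : ZMod N) * A := by
      rw [Units.val_mul]; ring
    have e3 : (v : ZMod N) * ((u : ZMod N) * B) = ((u * v : (ZMod N)ˣ) : ZMod N) * B := by
      rw [Units.val_mul]; ring
    rw [e2, e3] at h2'
    exact h2'
  -- membership of scaled functions in the orbit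
  have hmem : ∀ u : (ZMod N)ˣ,
      Fo N ((u : ZMod N) * A) ((u : ZMod N) * B) ∈ orbit N (cubicMRS N j kk) := by
    intro u
    exact ⟨u, by rw [cubicMRS_eq_Fo, permAct_Fo]⟩
  -- Step 1: P (u2 * u2), i.e. scaling by 4 stabilizes
  have hP4 : P (u2 * u2) := by
    by_contra hne4
    obtain ⟨p, q, hpq, hOeq⟩ := Set.ncard_eq_two.mp h2
    have m1 : Fo N A B ∈ orbit N (cubicMRS N j kk) := by
      have := hmem 1
      simpa using this
    have m2 := hmem u2
    have m4 := hmem (u2 * u2)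
    rw [hOeq] at m1 m2 m4
    have key : P u2 ∨ Fo N ((u2 : ZMod N) * A) ((u2 : ZMod N) * B)
        = Fo N (((u2 * u2 : (ZMod N)ˣ) : ZMod N) * A) (((u2 * u2 : (ZMod N)ˣ) : ZMod N) * B)
        ∨ P (u2 * u2) := by
      simp only [Set.mem_insert_iff, Set.mem_singleton_iff] at m1 m2 m4
      rcases m1 with e1 | e1 <;> rcases m2 with e2 | e2 <;> rcases m4 with e4 | e4
      · exact Or.inl (e2.trans e1.symm)
      · exact Or.inl (e2.trans e1.symm)
      · exact Or.inr (Or.inr (e4.trans e1.symm))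
      · exact Or.inr (Or.inl (e2.trans e4.symm))
      · exact Or.inr (Or.inl (e2.trans e4.symm))
      · exact Or.inr (Or.inr (e4.trans e1.symm))
      · exact Or.inl (e2.trans e1.symm)
      · exact Or.inl (e2.trans e1.symm)
    rcases key with hcase | hcase | hcase
    · exact hne4 (Pmul u2 u2 hcase hcase)
    · -- Fo(2A,2B) = Fo(4A,4B); divide by u2 to get P u2
      obtain ⟨d1, d2, d3⟩ := hdist u2
      obtain ⟨d1', d2', d3'⟩ := hdist (u2 * u2)
      obtain ⟨t, ht⟩ := translate_of_Fo_eq hodd d1 d2 d3 d1' d2' d3' hcase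
      have hsc := translate_scale ((u2⁻¹ : (ZMod N)ˣ) : ZMod N) t _ _ _ _ ht
      have einv : ∀ X : ZMod N, ((u2⁻¹ : (ZMod N)ˣ) : ZMod N) * ((u2 : ZMod N) * X) = X := by
        intro X
        rw [← mul_assoc, Units.inv_mul, one_mul]
      have einv2 : ∀ X : ZMod N,
          ((u2⁻¹ : (ZMod N)ˣ) : ZMod N) * (((u2 * u2 : (ZMod N)ˣ) : ZMod N) * X)
            = (u2 : ZMod N) * X := by
        intro X
        rw [Units.val_mul, ← mul_assoc, ← mul_assoc, Units.inv_mul, one_mul]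
      rw [einv A, einv B, einv2 A, einv2 B] at hsc
      have hPu2 : P u2 := ofSt u2 ⟨_, hsc⟩
      exact hne4 (Pmul u2 u2 hPu2 hPu2)
    · exact hne4 hcase
  -- extract the translate relation for 4
  have hF4 : ∃ t : ZMod N, ({0, A, B} : Finset (ZMod N)).image (· + t)
      = {0, (4 : ZMod N) * A, (4 : ZMod N) * B} := by
    obtain ⟨t, ht⟩ := toSt (u2 * u2) hP4
    rw [hu4] at ht
    exact ⟨t, ht⟩
  obtain ⟨t, ht⟩ := hF4
  have ht' : ({t, A + t, B + t} : Finset (ZMod N)) = {0, 4 * A, 4 * B} := by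
    rw [← ht, Finset.image_insert, Finset.image_insert, Finset.image_singleton, zero_add]
  -- memberships
  have mt : t ∈ ({0, 4 * A, 4 * B} : Finset (ZMod N)) := by
    rw [← ht']; simp
  have mA : A + t ∈ ({0, 4 * A, 4 * B} : Finset (ZMod N)) := by
    rw [← ht']; simp
  have mB : B + t ∈ ({0, 4 * A, 4 * B} : Finset (ZMod N)) := by
    rw [← ht']; simp
  simp only [Finset.mem_insert, Finset.mem_singleton] at mt mA mB
  -- Step 2: case analysis gives 3A = 0 and 3B = 0
  have h3 : (3 : ZMod N) * A = 0 ∧ (3 : ZMod N) * B = 0 := by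
    rcases mt with rfl | rfl | rfl
    · -- t = 0
      rw [add_zero] at mA mB
      rcases mA with hA0 | hA4 | hA4B
      · exact absurd hA0 hA
      · have e3A : (3 : ZMod N) * A = 0 := by linear_combination -hA4
        rcases mB with hB0 | hB4A | hB4B
        · exact absurd hB0 hB
        · have : B = A := by linear_combination hB4A + e3A
          exact absurd this.symm hAB
        · exact ⟨e3A, by linear_combination -hB4B⟩
      · rcases mB with hB0 | hB4A | hB4B
        · exact absurd hB0 hB
        · have e15 : (5 : ZMod N) * ((3 : ZMod N) * A) = 0 := by
            linear_combination -hA4B - 4 * hB4A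
          have e3A := h5 _ e15
          have : B = A := by linear_combination hB4A + e3A
          exact absurd this.symm hAB
        · have e3B : (3 : ZMod N) * B = 0 := by linear_combination -hB4B
          have : A = B := by linear_combination hA4B + e3B
          exact absurd this hAB
    · -- t = 4A
      rcases mA with hA0 | hA4 | hA4B
      · have : A = 0 := h5 _ (by linear_combination hA0)
        exact absurd this hA
      · have : A = 0 := by linear_combination hA4
        exact absurd this hA
      · rcases mB with hB0 | hB4A | hB4B
        · have e21 : (7 : ZMod N) * ((3 : ZMod N) * A) = 0 := by
            linear_combination hA4B + 4 * hB0
          have e3A := h7 _ e21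
          have e3B : (3 : ZMod N) * B = 0 := by linear_combination 3 * hB0 - 4 * e3A
          exact ⟨e3A, e3B⟩
        · have : B = 0 := by linear_combination hB4A
          exact absurd this hB
        · have : A = 0 := by linear_combination -3 * hA4B + 4 * hB4B
          exact absurd this hA
    · -- t = 4B
      rcases mB with hB0 | hB4A | hB4B
      · have : B = 0 := h5 _ (by linear_combination hB0)
        exact absurd this hB
      · rcases mA with hA0 | hA4A | hA4B
        · have e21 : (7 : ZMod N) * ((3 : ZMod N) * B) = 0 := by
            linear_combination hB4A + 4 * hA0
          have e3B := h7 _ e21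
          have e3A : (3 : ZMod N) * A = 0 := by linear_combination 3 * hA0 - 4 * e3B
          exact ⟨e3A, e3B⟩
        · have : B = 0 := by linear_combination -3 * hB4A + 4 * hA4A
          exact absurd this hB
        · have : A = 0 := by linear_combination hA4B
          exact absurd this hA
      · have : B = 0 := by linear_combination hB4B
        exact absurd this hB
  obtain ⟨h3A, h3B⟩ := h3
  -- Step 3: then the orbit is a singleton, contradiction
  have hm3 : N = 3 * 3 ^ (k - 1) := by
    rw [hN]
    calc 3 ^ k = 3 ^ (k - 1 + 1) := by rw [Nat.sub_add_cancel hk]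
    _ = 3 ^ (k - 1) * 3 := pow_succ 3 (k - 1)
    _ = 3 * 3 ^ (k - 1) := by ring
  have hkey : ∀ x : ZMod N, x ≠ 0 → (3 : ZMod N) * x = 0 → x = A ∨ x = B := by
    intro x hx h3x
    rcases ker3_s16 _ hm3 A h3A with hA' | hA' | hA'
    · exact absurd hA' hA
    all_goals rcases ker3_s16 _ hm3 B h3B with hB' | hB' | hB'
    · exact absurd hB' hB
    · exact absurd (hA'.trans hB'.symm) hAB
    · rcases ker3_s16 _ hm3 x h3x with h | h | h
      · exact absurd h hx
      · exact Or.inl (h.trans hA'.symm)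
      · exact Or.inr (h.trans hB'.symm)
    · exact absurd hB' hB
    · rcases ker3_s16 _ hm3 x h3x with h | h | h
      · exact absurd h hx
      · exact Or.inr (h.trans hB'.symm)
      · exact Or.inl (h.trans hA'.symm)
    · exact absurd (hA'.trans hB'.symm) hAB
  have horb : orbit N (cubicMRS N j kk) = {Fo N A B} := by
    apply Set.eq_singleton_iff_unique_mem.mpr
    constructor
    · refine ⟨1, ?_⟩
      rw [cubicMRS_eq_Fo, permAct_Fo]
      simp
      rfl
    · intro g hg
      obtain ⟨u, rfl⟩ := hg
      rw [cubicMRS_eq_Fo, permAct_Fo]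
      obtain ⟨d1, d2, d3⟩ := hdist u
      have h3uA : (3 : ZMod N) * ((u : ZMod N) * A) = 0 := by
        linear_combination (u : ZMod N) * h3A
      have h3uB : (3 : ZMod N) * ((u : ZMod N) * B) = 0 := by
        linear_combination (u : ZMod N) * h3B
      rcases hkey _ d1 h3uA with hXA | hXA <;> rcases hkey _ d2 h3uB with hXB | hXB
      · exact absurd (hXA.trans hXB.symm) d3
      · rw [hXA, hXB]
      · rw [hXA, hXB]; exact Fo_swap B A
      · exact absurd (hXA.trans hXB.symm) d3
  rw [horb] at h2
  simp at h2
end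

section
/- Let n = 3^k and let j satisfy 2 ≤ j ≤ k. Then the orbit of the cubic MRS function f_j = (1, 3^{k−j}+1, 2·3^{k−j}+1) under the action of G_n has exactly 3^{j−1} elements, and it is the only orbit of size 3^{j−1}. -/
/-! ### Auxiliary machinery -/

section Aux
open Finset

variable (n : ℕ) [NeZero n]

/-- A cubic MRS-type sum parametrized directly by the two offsets in `ZMod n`. -/
def mrs (a b : ZMod n) : BF n := fun x => ∑ i : ZMod n, x i * x (i + a) * x (i + b)

lemma cubicMRS_eq_mrs (p q : ℕ) :
    cubicMRS n p q = mrs n ((p - 1 : ℕ) : ZMod n) ((q - 1 : ℕ) : ZMod n) := rfl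

variable {n}

lemma permAct_sigma_mrs (u : (ZMod n)ˣ) (a b : ZMod n) :
    permAct (sigmaPerm u) (mrs n a b) = mrs n ((u : ZMod n) * a) ((u : ZMod n) * b) := by
  funext x
  simp only [permAct, mrs, sigmaPerm, Equiv.coe_fn_mk]
  refine Fintype.sum_equiv (sigmaPerm u) _ _ fun i => ?_
  simp only [sigmaPerm, Equiv.coe_fn_mk, mul_add]

lemma mrs_swap (a b : ZMod n) : mrs n a b = mrs n b a := by
  funext x
  exact Finset.sum_congr rfl fun i _ => by ring

lemma mrs_shift (a b : ZMod n) : mrs n a b = mrs n (b - a) (-a) := by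
  funext x
  show (∑ i : ZMod n, x i * x (i + a) * x (i + b))
      = ∑ i : ZMod n, x i * x (i + (b - a)) * x (i + -a)
  refine Fintype.sum_equiv (Equiv.addRight a) _ _ fun i => ?_
  simp only [Equiv.coe_addRight]
  rw [show i + a + (b - a) = i + b by ring, show i + a + -a = i by ring]
  ring

lemma mrs_ap_neg (c : ZMod n) : mrs n c (2 * c) = mrs n (-c) (2 * -c) := by
  calc mrs n c (2 * c) = mrs n (2 * c - c) (-c) := mrs_shift _ _
    _ = mrs n c (-c) := by rw [show (2 : ZMod n) * c - c = c by ring]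
    _ = mrs n (-c - c) (-c) := mrs_shift _ _
    _ = mrs n (-c) (-c - c) := mrs_swap _ _
    _ = mrs n (-c) (2 * -c) := by rw [show -c - c = 2 * -c by ring]

lemma mrs_neg_self (a : ZMod n) : mrs n a (-a) = mrs n (-a) (2 * -a) := by
  calc mrs n a (-a) = mrs n (-a - a) (-a) := mrs_shift _ _
    _ = mrs n (-a) (-a - a) := mrs_swap _ _
    _ = mrs n (-a) (2 * -a) := by rw [show -a - a = 2 * -a by ring]

lemma mrs_indicator (a b : ZMod n) (T : Finset (ZMod n)) :
    mrs n a b (fun i => if i ∈ T then 1 else 0) =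
      ((Finset.univ.filter fun i : ZMod n => i ∈ T ∧ i + a ∈ T ∧ i + b ∈ T).card : ZMod 2) := by
  rw [← Finset.sum_boole]
  refine Finset.sum_congr rfl fun i _ => ?_
  by_cases h1 : i ∈ T <;> by_cases h2 : i + a ∈ T <;> by_cases h3 : i + b ∈ T <;>
    simp [h1, h2, h3]

/-- the translation stabilizer of a finset of `ZMod n`. -/
def transStab (T : Finset (ZMod n)) : AddSubgroup (ZMod n) where
  carrier := {i | ∀ t ∈ T, t + i ∈ T}
  zero_mem' := by intro t ht; simpa using ht
  add_mem' := by
    intro x y hx hy t ht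
    rw [← add_assoc]
    exact hy _ (hx t ht)
  neg_mem' := by
    intro x hx t ht
    have himg : T.image (· + x) = T := by
      apply Finset.eq_of_subset_of_card_le
      · intro s hs
        obtain ⟨r, hr, rfl⟩ := Finset.mem_image.1 hs
        exact hx r hr
      · rw [Finset.card_image_of_injective _ (add_left_injective x)]
    rw [← himg] at ht
    obtain ⟨r, hr, hrx⟩ := Finset.mem_image.1 ht
    have : t + -x = r := by rw [← hrx]; ring
    rw [this]; exact hr

lemma transStab_card_odd (hodd : Odd n) (T : Finset (ZMod n)) :
    Odd (Finset.univ.filter fun i : ZMod n => ∀ t ∈ T, t + i ∈ T).card := by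
  classical
  have hcard : (Finset.univ.filter fun i : ZMod n => ∀ t ∈ T, t + i ∈ T).card
      = Nat.card (transStab T) := by
    rw [Nat.card_eq_fintype_card, Fintype.card_subtype]
    congr 1
    ext i
    simp only [Finset.mem_filter]
    exact and_congr_right fun _ => Iff.rfl
  have hdvd : Nat.card (transStab T) ∣ n := by
    simpa [Nat.card_zmod] using AddSubgroup.card_addSubgroup_dvd_card (transStab T)
  rw [hcard]
  rcases hdvd with ⟨d, hd⟩
  rw [hd] at hodd
  exact (Nat.odd_mul.mp hodd).1

lemma mrs_indicator_self (hodd : Odd n) {a b : ZMod n} (ha : a ≠ 0) (hb : b ≠ 0)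
    (hab : a ≠ b) :
    mrs n a b (fun i => if i ∈ ({0, a, b} : Finset (ZMod n)) then 1 else 0) = 1 := by
  rw [mrs_indicator]
  have hfe : (Finset.univ.filter fun i : ZMod n =>
        i ∈ ({0, a, b} : Finset (ZMod n)) ∧ i + a ∈ ({0, a, b} : Finset (ZMod n)) ∧
          i + b ∈ ({0, a, b} : Finset (ZMod n))).card
      = (Finset.univ.filter fun i : ZMod n =>
          ∀ t ∈ ({0, a, b} : Finset (ZMod n)), t + i ∈ ({0, a, b} : Finset (ZMod n))).card := by
    congr 1
    apply Finset.filter_congr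
    intro i _
    constructor
    · rintro ⟨h0, h1, h2⟩ t ht
      simp only [Finset.mem_insert, Finset.mem_singleton] at ht
      rcases ht with rfl | rfl | rfl
      · simpa using h0
      · rwa [add_comm]
      · rwa [add_comm]
    · intro h
      refine ⟨by simpa using h 0 (by simp), ?_, ?_⟩
      · rw [add_comm]; exact h a (by simp)
      · rw [add_comm]; exact h b (by simp)
  rw [hfe]
  have hoddc := transStab_card_odd hodd ({0, a, b} : Finset (ZMod n))
  rw [← ZMod.natCast_mod _ 2, Nat.odd_iff.mp hoddc]
  norm_num

lemma mrs_eq_cases (hodd : Odd n) {a b a' b' : ZMod n} (ha : a ≠ 0) (hb : b ≠ 0)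
    (hab : a ≠ b) (ha' : a' ≠ 0) (hb' : b' ≠ 0) (hab' : a' ≠ b')
    (h : mrs n a b = mrs n a' b') :
    (a' = a ∧ b' = b) ∨ (a' = b ∧ b' = a) ∨ (a' = -a ∧ b' = b - a) ∨
      (a' = b - a ∧ b' = -a) ∨ (a' = -b ∧ b' = a - b) ∨ (a' = a - b ∧ b' = -b) := by
  have h1 : mrs n a b (fun i => if i ∈ ({0, a', b'} : Finset (ZMod n)) then 1 else 0) = 1 := by
    rw [h]; exact mrs_indicator_self hodd ha' hb' hab'
  rw [mrs_indicator] at h1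
  have hne : (Finset.univ.filter fun i : ZMod n =>
      i ∈ ({0, a', b'} : Finset (ZMod n)) ∧ i + a ∈ ({0, a', b'} : Finset (ZMod n)) ∧
        i + b ∈ ({0, a', b'} : Finset (ZMod n))).Nonempty := by
    rw [Finset.nonempty_iff_ne_empty]
    intro hemp
    rw [hemp] at h1
    simp at h1
  obtain ⟨i, hi⟩ := hne
  simp only [Finset.mem_filter, Finset.mem_insert, Finset.mem_singleton] at hi
  obtain ⟨-, hiT, hiaT, hibT⟩ := hi
  rcases hiT with rfl | rfl | rfl
  · rw [zero_add] at hiaT hibT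
    rcases hiaT with h1 | h1 | h1
    · exact absurd h1 ha
    · rcases hibT with h2 | h2 | h2
      · exact absurd h2 hb
      · exact absurd (h1.trans h2.symm) hab
      · exact Or.inl ⟨h1.symm, h2.symm⟩
    · rcases hibT with h2 | h2 | h2
      · exact absurd h2 hb
      · exact Or.inr (Or.inl ⟨h2.symm, h1.symm⟩)
      · exact absurd (h1.trans h2.symm) hab
  · rcases hiaT with h1 | h1 | h1
    · rcases hibT with h2 | h2 | h2
      · exact absurd (by linear_combination h1 - h2) hab
      · exact absurd (by linear_combination h2) hb
      · exact Or.inr (Or.inr (Or.inl ⟨by linear_combination h1, by linear_combination h1 - h2⟩))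
    · exact absurd (by linear_combination h1) ha
    · rcases hibT with h2 | h2 | h2
      · exact Or.inr (Or.inr (Or.inr (Or.inr (Or.inl
          ⟨by linear_combination h2, by linear_combination h2 - h1⟩))))
      · exact absurd (by linear_combination h2) hb
      · exact absurd (by linear_combination h1 - h2) hab
  · rcases hiaT with h1 | h1 | h1
    · rcases hibT with h2 | h2 | h2
      · exact absurd (by linear_combination h1 - h2) hab
      · exact Or.inr (Or.inr (Or.inr (Or.inl
          ⟨by linear_combination h1 - h2, by linear_combination h1⟩)))
      · exact absurd (by linear_combination h2) hb
    · rcases hibT with h2 | h2 | h2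
      · exact Or.inr (Or.inr (Or.inr (Or.inr (Or.inr
          ⟨by linear_combination h2 - h1, by linear_combination h2⟩))))
      · exact absurd (by linear_combination h1 - h2) hab
      · exact absurd (by linear_combination h2) hb
    · exact absurd (by linear_combination h1) ha

omit [NeZero n] in
lemma permAct_sigma_mul (u v : (ZMod n)ˣ) (f : BF n) :
    permAct (sigmaPerm u) (permAct (sigmaPerm v) f) = permAct (sigmaPerm (u * v)) f := by
  funext x
  simp only [permAct, sigmaPerm, Equiv.coe_fn_mk, Units.val_mul, mul_assoc]

omit [NeZero n] in
lemma permAct_sigma_one (f : BF n) : permAct (sigmaPerm (1 : (ZMod n)ˣ)) f = f := by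
  funext x
  simp only [permAct, sigmaPerm, Equiv.coe_fn_mk, Units.val_one, one_mul]

omit [NeZero n] in
lemma permAct_sigma_injective (u : (ZMod n)ˣ) :
    Function.Injective fun f : BF n => permAct (sigmaPerm u) f := by
  intro f g hfg
  have := congrArg (fun h => permAct (sigmaPerm u⁻¹) h) hfg
  simpa only [permAct_sigma_mul, inv_mul_cancel, permAct_sigma_one] using this

lemma orbit_permAct (u : (ZMod n)ˣ) (f : BF n) :
    orbit n (permAct (sigmaPerm u) f) = orbit n f := by
  ext g
  constructor
  · rintro ⟨w, rfl⟩
    exact ⟨w * u, by rw [permAct_sigma_mul]⟩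
  · rintro ⟨w, rfl⟩
    exact ⟨w * u⁻¹, by rw [permAct_sigma_mul, inv_mul_cancel_right]⟩

open scoped Classical in
lemma orbit_ncard_mul (f : BF n) :
    (orbit n f).ncard *
      (Finset.univ.filter fun w : (ZMod n)ˣ => permAct (sigmaPerm w) f = f).card
      = Fintype.card (ZMod n)ˣ := by
  classical
  set ρ : (ZMod n)ˣ → BF n := fun u => permAct (sigmaPerm u) f with hρ
  have horb : orbit n f = ↑(Finset.univ.image ρ) := by
    ext g
    simp only [orbit, Set.mem_setOf_eq, Finset.coe_image, Set.mem_image, Finset.mem_coe,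
      Finset.mem_univ, true_and, Finset.coe_univ, Set.image_univ, Set.mem_range]
    exact ⟨fun ⟨u, hu⟩ => ⟨u, hu.symm⟩, fun ⟨u, hu⟩ => ⟨u, hu.symm⟩⟩
  rw [horb, Set.ncard_coe_finset]
  have hkey : ∀ u v : (ZMod n)ˣ, ρ u = ρ v ↔ ρ (u * v⁻¹) = f := by
    intro u v
    constructor
    · intro huv
      apply permAct_sigma_injective v
      show permAct (sigmaPerm v) (ρ (u * v⁻¹)) = permAct (sigmaPerm v) f
      rw [hρ]
      simp only
      rw [permAct_sigma_mul, show v * (u * v⁻¹) = u by rw [mul_comm u v⁻¹, mul_inv_cancel_left]]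
      exact huv
    · intro huv
      have : permAct (sigmaPerm v) (ρ (u * v⁻¹)) = permAct (sigmaPerm v) f := by rw [huv]
      rw [hρ] at this
      simp only at this
      rwa [permAct_sigma_mul,
        show v * (u * v⁻¹) = u by rw [mul_comm u v⁻¹, mul_inv_cancel_left]] at this
  have hfib : Fintype.card (ZMod n)ˣ =
      ∑ g ∈ Finset.univ.image ρ, (Finset.univ.filter fun u => ρ u = g).card := by
    rw [← Finset.card_univ]
    exact Finset.card_eq_sum_card_fiberwise fun u _ => Finset.mem_image_of_mem ρ (mem_univ u)
  rw [hfib]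
  rw [Finset.sum_congr rfl (fun g hg => ?_), Finset.sum_const, smul_eq_mul, mul_comm]
  obtain ⟨v, -, rfl⟩ := Finset.mem_image.1 hg
  apply Finset.card_bij' (fun u _ => u * v⁻¹) (fun w _ => w * v)
  · intro u hu
    simp only [Finset.mem_filter, Finset.mem_univ, true_and] at hu ⊢
    exact (hkey u v).1 hu
  · intro w hw
    simp only [Finset.mem_filter, Finset.mem_univ, true_and] at hw ⊢
    rw [hkey (w * v) v, mul_inv_cancel_right]
    exact hw
  · intro u _; group
  · intro w _; group

end Aux

lemma fiber_count {G H : Type*} [Group G] [Fintype G] [Group H] [Fintype H] [DecidableEq H]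
    (φ : G →* H) (hs : Function.Surjective φ) (y : H) :
    (Finset.univ.filter fun g => φ g = y).card * Fintype.card H = Fintype.card G := by
  classical
  have hconst : ∀ y z : H, (Finset.univ.filter fun g => φ g = y).card
      = (Finset.univ.filter fun g => φ g = z).card := by
    intro y z
    obtain ⟨g₀, hg₀⟩ := hs (y * z⁻¹)
    apply Finset.card_bij' (fun g _ => g₀⁻¹ * g) (fun g _ => g₀ * g)
    · intro g hg
      simp only [Finset.mem_filter, Finset.mem_univ, true_and] at hg ⊢
      rw [map_mul, map_inv, hg, hg₀]
      group
    · intro g hg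
      simp only [Finset.mem_filter, Finset.mem_univ, true_and] at hg ⊢
      rw [map_mul, hg, hg₀]
      group
    · intro g _; group
    · intro g _; group
  have hfib : Fintype.card G =
      ∑ z ∈ (Finset.univ : Finset H), (Finset.univ.filter fun g => φ g = z).card := by
    rw [← Finset.card_univ]
    exact Finset.card_eq_sum_card_fiberwise fun g _ => Finset.mem_univ _
  rw [hfib, Finset.sum_congr rfl fun z _ => hconst z y, Finset.sum_const, smul_eq_mul,
    Finset.card_univ, mul_comm]

lemma mul_pow3_eq_zero_iff {k m : ℕ} (hm : m ≤ k) (x : ZMod (3 ^ k)) :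
    (x * (3 : ZMod (3 ^ k)) ^ m = 0 ↔ (3 : ℕ) ^ (k - m) ∣ x.val) := by
  have hx : x * (3 : ZMod (3 ^ k)) ^ m = ((x.val * 3 ^ m : ℕ) : ZMod (3 ^ k)) := by
    push_cast
    rw [ZMod.natCast_val, ZMod.cast_id]
  rw [hx, ZMod.natCast_eq_zero_iff]
  generalize x.val = v
  rw [show 3 ^ k = 3 ^ (k - m) * 3 ^ m by rw [← pow_add]; congr 1; omega]
  exact Nat.mul_dvd_mul_iff_right (by positivity : 0 < 3 ^ m)

lemma castHom_eq_iff_dvd {k M : ℕ} [NeZero M] (h : M ∣ 3 ^ k) (x : ZMod (3 ^ k)) :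
    (ZMod.castHom h (ZMod M) x = 0 ↔ M ∣ x.val) := by
  rw [ZMod.castHom_apply, ← ZMod.natCast_val, ZMod.natCast_eq_zero_iff]

lemma two_isUnit_of_odd {n : ℕ} [NeZero n] (hodd : Odd n) : IsUnit (2 : ZMod n) := by
  have h := (ZMod.isUnit_iff_coprime 2 n).mpr (Nat.coprime_two_left.mpr hodd)
  simpa using h

lemma stab_mrs_ap {n : ℕ} [NeZero n] (hodd : Odd n) {c : ZMod n} (hc : c ≠ 0)
    (w : (ZMod n)ˣ) :
    permAct (sigmaPerm w) (mrs n c (2 * c)) = mrs n c (2 * c) ↔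
      (w : ZMod n) * c = c ∨ (w : ZMod n) * c = -c := by
  have h2u := two_isUnit_of_odd (n := n) hodd
  have h2c : (2 : ZMod n) * c ≠ 0 := fun hh => hc ((h2u.mul_right_eq_zero).mp hh)
  have hc2 : c ≠ 2 * c := fun hh => hc (by linear_combination -hh)
  rw [permAct_sigma_mrs]
  constructor
  · intro h
    rw [show (w : ZMod n) * (2 * c) = 2 * ((w : ZMod n) * c) by ring] at h
    set W := (w : ZMod n) * c with hW
    have hWne : W ≠ 0 := fun hh => hc ((Units.mul_right_eq_zero w).mp hh)
    have hW2ne : 2 * W ≠ 0 := fun hh => h2c (by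
      apply (Units.mul_right_eq_zero w).mp
      rw [show (w : ZMod n) * (2 * c) = 2 * W by rw [hW]; ring]
      exact hh)
    have hWW : W ≠ 2 * W := fun hh => hWne (by linear_combination -hh)
    rcases mrs_eq_cases hodd hWne hW2ne hWW hc h2c hc2 h with
      ⟨h1, -⟩ | ⟨h1, h2⟩ | ⟨h1, -⟩ | ⟨h1, -⟩ | ⟨h1, h2⟩ | ⟨h1, -⟩
    · exact Or.inl h1.symm
    · exact Or.inr (by linear_combination h2 - h1)
    · exact Or.inr (by linear_combination h1)
    · exact Or.inl (by linear_combination -h1)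
    · exact Or.inl (by linear_combination h1 - h2)
    · exact Or.inr (by linear_combination h1)
  · intro h
    rcases h with h | h
    · rw [show (w : ZMod n) * (2 * c) = 2 * ((w : ZMod n) * c) by ring, h]
    · rw [show (w : ZMod n) * (2 * c) = 2 * ((w : ZMod n) * c) by ring, h]
      exact (mrs_ap_neg c).symm

section Count
variable {k m : ℕ}

lemma pow3_dvd (hm : m < k) : (3 : ℕ) ^ (k - m) ∣ 3 ^ k := pow_dvd_pow 3 (Nat.sub_le k m)

lemma unitsMap_coe (hm : m < k) (w : (ZMod (3 ^ k))ˣ) :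
    ((ZMod.unitsMap (pow3_dvd hm) w : ZMod (3 ^ (k - m)))) =
      ZMod.castHom (pow3_dvd hm) (ZMod (3 ^ (k - m))) (w : ZMod (3 ^ k)) := rfl

lemma wc_eq_one_iff (hm : m < k) (u₀ w : (ZMod (3 ^ k))ˣ) :
    (w : ZMod (3 ^ k)) * ((u₀ : ZMod (3 ^ k)) * 3 ^ m) = (u₀ : ZMod (3 ^ k)) * 3 ^ m ↔
      ZMod.unitsMap (pow3_dvd hm) w = 1 := by
  have hu : IsUnit (ZMod.castHom (pow3_dvd hm) (ZMod (3 ^ (k - m))) (u₀ : ZMod (3 ^ k))) :=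
    ⟨ZMod.unitsMap (pow3_dvd hm) u₀, rfl⟩
  rw [← sub_eq_zero,
    show (w : ZMod (3 ^ k)) * ((u₀ : ZMod (3 ^ k)) * 3 ^ m) - (u₀ : ZMod (3 ^ k)) * 3 ^ m
      = (((w : ZMod (3 ^ k)) - 1) * (u₀ : ZMod (3 ^ k))) * (3 : ZMod (3 ^ k)) ^ m by ring,
    mul_pow3_eq_zero_iff hm.le, ← castHom_eq_iff_dvd (pow3_dvd hm), map_mul,
    hu.mul_left_eq_zero, map_sub, map_one, sub_eq_zero]
  rw [Units.ext_iff, unitsMap_coe hm, Units.val_one]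

lemma wc_eq_neg_one_iff (hm : m < k) (u₀ w : (ZMod (3 ^ k))ˣ) :
    (w : ZMod (3 ^ k)) * ((u₀ : ZMod (3 ^ k)) * 3 ^ m) = -((u₀ : ZMod (3 ^ k)) * 3 ^ m) ↔
      ZMod.unitsMap (pow3_dvd hm) w = -1 := by
  have hu : IsUnit (ZMod.castHom (pow3_dvd hm) (ZMod (3 ^ (k - m))) (u₀ : ZMod (3 ^ k))) :=
    ⟨ZMod.unitsMap (pow3_dvd hm) u₀, rfl⟩
  rw [← sub_eq_zero,
    show (w : ZMod (3 ^ k)) * ((u₀ : ZMod (3 ^ k)) * 3 ^ m) - -((u₀ : ZMod (3 ^ k)) * 3 ^ m)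
      = (((w : ZMod (3 ^ k)) + 1) * (u₀ : ZMod (3 ^ k))) * (3 : ZMod (3 ^ k)) ^ m by ring,
    mul_pow3_eq_zero_iff hm.le, ← castHom_eq_iff_dvd (pow3_dvd hm), map_mul,
    hu.mul_left_eq_zero, map_add, map_one]
  constructor
  · intro hh
    apply Units.ext
    rw [unitsMap_coe hm, Units.val_neg, Units.val_one]
    linear_combination hh
  · intro hh
    have := congrArg Units.val hh
    rw [unitsMap_coe hm, Units.val_neg, Units.val_one] at this
    rw [this]
    ring

lemma totient_pow3 {r : ℕ} (hr : 0 < r) : Nat.totient (3 ^ r) = 3 ^ (r - 1) * 2 := by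
  rw [Nat.totient_prime_pow Nat.prime_three hr]

lemma card_units_pow3 {r : ℕ} (hr : 0 < r) :
    Fintype.card (ZMod (3 ^ r))ˣ = 3 ^ (r - 1) * 2 := by
  rw [ZMod.card_units_eq_totient, totient_pow3 hr]

open scoped Classical in
lemma card_fiber_unitsMap (hm : m < k) (y : (ZMod (3 ^ (k - m)))ˣ) :
    (Finset.univ.filter fun w : (ZMod (3 ^ k))ˣ =>
      ZMod.unitsMap (pow3_dvd hm) w = y).card = 3 ^ m := by
  have h1 := fiber_count (ZMod.unitsMap (pow3_dvd hm))
    (ZMod.unitsMap_surjective (pow3_dvd hm)) y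
  rw [card_units_pow3 (by omega : 0 < k - m), card_units_pow3 (by omega : 0 < k)] at h1
  have h2 : (3 : ℕ) ^ m * (3 ^ (k - m - 1) * 2) = 3 ^ (k - 1) * 2 := by
    rw [← mul_assoc, ← pow_add]
    congr 2
    omega
  exact Nat.eq_of_mul_eq_mul_right (by positivity) (h1.trans h2.symm)

open scoped Classical in
lemma card_stab_units (hm : m < k) (u₀ : (ZMod (3 ^ k))ˣ) :
    (Finset.univ.filter fun w : (ZMod (3 ^ k))ˣ =>
      (w : ZMod (3 ^ k)) * ((u₀ : ZMod (3 ^ k)) * 3 ^ m) = (u₀ : ZMod (3 ^ k)) * 3 ^ m ∨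
      (w : ZMod (3 ^ k)) * ((u₀ : ZMod (3 ^ k)) * 3 ^ m) = -((u₀ : ZMod (3 ^ k)) * 3 ^ m)).card
      = 2 * 3 ^ m := by
  have hcongr : (Finset.univ.filter fun w : (ZMod (3 ^ k))ˣ =>
      (w : ZMod (3 ^ k)) * ((u₀ : ZMod (3 ^ k)) * 3 ^ m) = (u₀ : ZMod (3 ^ k)) * 3 ^ m ∨
      (w : ZMod (3 ^ k)) * ((u₀ : ZMod (3 ^ k)) * 3 ^ m) = -((u₀ : ZMod (3 ^ k)) * 3 ^ m))
      = Finset.univ.filter fun w : (ZMod (3 ^ k))ˣ =>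
        ZMod.unitsMap (pow3_dvd hm) w = 1 ∨ ZMod.unitsMap (pow3_dvd hm) w = -1 := by
    apply Finset.filter_congr
    intro w _
    rw [wc_eq_one_iff hm, wc_eq_neg_one_iff hm]
  rw [hcongr, Finset.filter_or, Finset.card_union_of_disjoint, card_fiber_unitsMap hm,
    card_fiber_unitsMap hm]
  · omega
  · rw [Finset.disjoint_filter]
    intro w _ h1 h2
    rw [h1] at h2
    have := congrArg Units.val h2
    rw [Units.val_one, Units.val_neg, Units.val_one] at this
    have h20 : ((2 : ℕ) : ZMod (3 ^ (k - m))) = 0 := by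
      push_cast
      linear_combination this
    rw [ZMod.natCast_eq_zero_iff] at h20
    have := Nat.le_of_dvd (by norm_num) h20
    have h3 : (3 : ℕ) ^ 1 ≤ 3 ^ (k - m) := Nat.pow_le_pow_right (by norm_num) (by omega)
    omega

lemma pow3_ne_zero_zmod (hm : m < k) : ((3 : ZMod (3 ^ k)) ^ m ≠ 0) := by
  intro hh
  have h3 : ((3 : ZMod (3 ^ k))) ^ m = ((3 ^ m : ℕ) : ZMod (3 ^ k)) := by push_cast; ring
  rw [h3, ZMod.natCast_eq_zero_iff] at hh
  rw [Nat.pow_dvd_pow_iff_le_right (by norm_num)] at hh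
  omega

open scoped Classical in
lemma orbit_mrs_ap_ncard (hm : m < k) (u₀ : (ZMod (3 ^ k))ˣ) :
    (orbit (3 ^ k) (mrs (3 ^ k) ((u₀ : ZMod (3 ^ k)) * 3 ^ m)
      (2 * ((u₀ : ZMod (3 ^ k)) * 3 ^ m)))).ncard = 3 ^ (k - 1 - m) := by
  have hodd : Odd ((3 : ℕ) ^ k) := Odd.pow (by decide)
  have hc : (u₀ : ZMod (3 ^ k)) * 3 ^ m ≠ 0 := fun hh =>
    pow3_ne_zero_zmod hm ((Units.mul_right_eq_zero u₀).mp hh)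
  have h1 := orbit_ncard_mul (n := 3 ^ k)
    (mrs (3 ^ k) ((u₀ : ZMod (3 ^ k)) * 3 ^ m) (2 * ((u₀ : ZMod (3 ^ k)) * 3 ^ m)))
  have hcongr : (Finset.univ.filter fun w : (ZMod (3 ^ k))ˣ =>
      permAct (sigmaPerm w) (mrs (3 ^ k) ((u₀ : ZMod (3 ^ k)) * 3 ^ m)
        (2 * ((u₀ : ZMod (3 ^ k)) * 3 ^ m)))
      = mrs (3 ^ k) ((u₀ : ZMod (3 ^ k)) * 3 ^ m) (2 * ((u₀ : ZMod (3 ^ k)) * 3 ^ m)))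
      = Finset.univ.filter fun w : (ZMod (3 ^ k))ˣ =>
      (w : ZMod (3 ^ k)) * ((u₀ : ZMod (3 ^ k)) * 3 ^ m) = (u₀ : ZMod (3 ^ k)) * 3 ^ m ∨
      (w : ZMod (3 ^ k)) * ((u₀ : ZMod (3 ^ k)) * 3 ^ m)
        = -((u₀ : ZMod (3 ^ k)) * 3 ^ m) := by
    apply Finset.filter_congr
    intro w _
    rw [stab_mrs_ap hodd hc w]
  rw [hcongr, card_stab_units hm u₀, card_units_pow3 (by omega : 0 < k)] at h1
  have h2 : (3 : ℕ) ^ (k - 1 - m) * (2 * 3 ^ m) = 3 ^ (k - 1) * 2 := by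
    rw [mul_comm 2 (3 ^ m), ← mul_assoc, ← pow_add]
    congr 2
    omega
  exact Nat.eq_of_mul_eq_mul_right (by positivity) (h1.trans h2.symm)

end Count

lemma rep_pow3 {k : ℕ} {c : ZMod (3 ^ k)} (hc : c ≠ 0) :
    ∃ m, m < k ∧ ∃ u : (ZMod (3 ^ k))ˣ, c = (u : ZMod (3 ^ k)) * 3 ^ m := by
  have hcv : ((c.val : ℕ) : ZMod (3 ^ k)) = c := by
    rw [ZMod.natCast_val, ZMod.cast_id]
  have hv0 : c.val ≠ 0 := fun h => hc (by rw [← hcv, h, Nat.cast_zero])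
  have hvlt : c.val < 3 ^ k := ZMod.val_lt c
  set v := c.val with hv
  set m := v.factorization 3 with hmdef
  have hdvd : 3 ^ m ∣ v := Nat.ordProj_dvd v 3
  have hnd : ¬ (3 ∣ v / 3 ^ m) := Nat.not_dvd_ordCompl Nat.prime_three hv0
  have hvt : v = 3 ^ m * (v / 3 ^ m) := (Nat.mul_div_cancel' hdvd).symm
  have hmk : m < k := by
    have h1 : 3 ^ m ≤ v := Nat.le_of_dvd (Nat.pos_of_ne_zero hv0) hdvd
    have h2 : (3 : ℕ) ^ m < 3 ^ k := lt_of_le_of_lt h1 hvlt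
    exact (Nat.pow_lt_pow_iff_right (by norm_num)).mp h2
  have hco : Nat.Coprime (v / 3 ^ m) (3 ^ k) :=
    (((Nat.Prime.coprime_iff_not_dvd Nat.prime_three).mpr hnd).symm).pow_right k
  refine ⟨m, hmk, ZMod.unitOfCoprime _ hco, ?_⟩
  rw [ZMod.coe_unitOfCoprime, ← hcv]
  conv_lhs => rw [hvt]
  push_cast
  ring

lemma isUnit_of_cast3_ne_zero {k : ℕ} (z : ZMod (3 ^ k))
    (h : ((z.val : ℕ) : ZMod 3) ≠ 0) : IsUnit z := by
  rw [Ne, ZMod.natCast_eq_zero_iff] at h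
  have hco : Nat.Coprime z.val (3 ^ k) :=
    (((Nat.Prime.coprime_iff_not_dvd Nat.prime_three).mpr h).symm).pow_right k
  have := (ZMod.isUnit_iff_coprime z.val (3 ^ k)).mpr hco
  rwa [ZMod.natCast_val, ZMod.cast_id] at this

lemma units_val_eq_neg_one {k : ℕ} (hk : 0 < k) (w : (ZMod (3 ^ k))ˣ)
    (hw2 : w ^ 2 = 1) (hw1 : w ≠ 1) : (w : ZMod (3 ^ k)) = -1 := by
  set x := (w : ZMod (3 ^ k)) with hxdef
  have hx2 : x ^ 2 = 1 := by
    have := congrArg Units.val hw2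
    rwa [Units.val_pow_eq_pow_val, Units.val_one] at this
  have hx1 : x ≠ 1 := fun h => hw1 (Units.ext h)
  have h0 : (x - 1) * (x + 1) = 0 := by linear_combination hx2
  by_cases hminus : (((x - 1).val : ℕ) : ZMod 3) = 0
  · by_cases hplus : (((x + 1).val : ℕ) : ZMod 3) = 0
    · exfalso
      have e1 : (((x + 1).val : ℕ) : ZMod 3) - (((x - 1).val : ℕ) : ZMod 3) = 0 := by
        rw [hminus, hplus, sub_zero]
      have e2 : ∀ z : ZMod (3 ^ k), ((z.val : ℕ) : ZMod 3) =
          ZMod.castHom (dvd_pow_self 3 hk.ne') (ZMod 3) z := by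
        intro z
        rw [ZMod.castHom_apply, ← ZMod.natCast_val]
      rw [e2, e2, ← map_sub, show x + 1 - (x - 1) = 2 by ring] at e1
      have : ZMod.castHom (dvd_pow_self 3 hk.ne') (ZMod 3) 2 = 2 := by
        rw [map_ofNat]
      rw [this] at e1
      revert e1
      decide
    · have hu : IsUnit (x + 1) := isUnit_of_cast3_ne_zero _ hplus
      have : x - 1 = 0 := by
        rw [mul_comm] at h0
        exact (hu.mul_right_eq_zero).mp h0
      exact absurd (by linear_combination this) hx1
  · have hu : IsUnit (x - 1) := isUnit_of_cast3_ne_zero _ hminus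
    have : x + 1 = 0 := (hu.mul_right_eq_zero).mp h0
    linear_combination this

/-- For `n = 3^k` and `2 ≤ j ≤ k`: the orbit of `f_j = (1, 3^{k-j}+1, 2·3^{k-j}+1)`
under the action of `G_n` has exactly `3^{j-1}` elements, and it is the only orbit of
size `3^{j-1}`. -/
theorem orbit_fj (k : ℕ) (n : ℕ) (hn : n = 3 ^ k) [NeZero n]
    (j : ℕ) (hj2 : 2 ≤ j) (hjk : j ≤ k) :
    (orbit n (cubicMRS n (3 ^ (k - j) + 1) (2 * 3 ^ (k - j) + 1))).ncard = 3 ^ (j - 1) ∧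
    (∀ S ∈ orbitsOn n, S.ncard = 3 ^ (j - 1) →
      S = orbit n (cubicMRS n (3 ^ (k - j) + 1) (2 * 3 ^ (k - j) + 1))) := by
  subst hn
  have hk : 0 < k := by omega
  have hodd : Odd ((3 : ℕ) ^ k) := Odd.pow (by decide)
  have hmj : k - j < k := by omega
  have htarget : cubicMRS (3 ^ k) (3 ^ (k - j) + 1) (2 * 3 ^ (k - j) + 1)
      = mrs (3 ^ k) (((1 : (ZMod (3 ^ k))ˣ) : ZMod (3 ^ k)) * 3 ^ (k - j))
        (2 * (((1 : (ZMod (3 ^ k))ˣ) : ZMod (3 ^ k)) * 3 ^ (k - j))) := by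
    rw [cubicMRS_eq_mrs]
    have e1 : ((3 ^ (k - j) + 1 - 1 : ℕ) : ZMod (3 ^ k))
        = ((1 : (ZMod (3 ^ k))ˣ) : ZMod (3 ^ k)) * 3 ^ (k - j) := by
      simp only [Nat.add_sub_cancel, Units.val_one, one_mul]
      push_cast
      try ring
    have e2 : ((2 * 3 ^ (k - j) + 1 - 1 : ℕ) : ZMod (3 ^ k))
        = 2 * (((1 : (ZMod (3 ^ k))ˣ) : ZMod (3 ^ k)) * 3 ^ (k - j)) := by
      simp only [Nat.add_sub_cancel, Units.val_one, one_mul]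
      push_cast
      try ring
    exact congrArg₂ _ e1 e2
  have hdirect : (orbit (3 ^ k)
      (cubicMRS (3 ^ k) (3 ^ (k - j) + 1) (2 * 3 ^ (k - j) + 1))).ncard = 3 ^ (j - 1) := by
    rw [htarget, orbit_mrs_ap_ncard hmj 1]
    congr 1
    omega
  refine ⟨hdirect, ?_⟩
  rintro S ⟨f, ⟨p, q, hp1, hpq, hqn, rfl⟩, rfl⟩ hS
  have hfm : cubicMRS (3 ^ k) p q
      = mrs (3 ^ k) ((p - 1 : ℕ) : ZMod (3 ^ k)) ((q - 1 : ℕ) : ZMod (3 ^ k)) :=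
    cubicMRS_eq_mrs _ _ _
  set a : ZMod (3 ^ k) := ((p - 1 : ℕ) : ZMod (3 ^ k)) with hadef
  set b : ZMod (3 ^ k) := ((q - 1 : ℕ) : ZMod (3 ^ k)) with hbdef
  have ha : a ≠ 0 := by
    rw [hadef, Ne, ZMod.natCast_eq_zero_iff]
    intro hdvd
    have := Nat.le_of_dvd (by omega) hdvd
    omega
  have hb : b ≠ 0 := by
    rw [hbdef, Ne, ZMod.natCast_eq_zero_iff]
    intro hdvd
    have := Nat.le_of_dvd (by omega) hdvd
    omega
  have hab : a ≠ b := by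
    rw [hadef, hbdef]
    intro hh
    have hmod := (ZMod.natCast_eq_natCast_iff _ _ _).mp hh
    have hd := (Nat.modEq_iff_dvd' (by omega : p - 1 ≤ q - 1)).mp hmod
    have := Nat.le_of_dvd (by omega) hd
    omega
  rw [hfm] at hS ⊢
  classical
  have h1 := orbit_ncard_mul (mrs (3 ^ k) a b)
  rw [hS, card_units_pow3 hk] at h1
  have h2u := two_isUnit_of_odd (n := 3 ^ k) hodd
  -- the stabilizer has even cardinality, so contains an element of order 2
  have heven : 2 ∣ (Finset.univ.filter fun w : (ZMod (3 ^ k))ˣ =>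
      permAct (sigmaPerm w) (mrs (3 ^ k) a b) = mrs (3 ^ k) a b).card := by
    have hdvd2 : (2 : ℕ) ∣ 3 ^ (j - 1) * (Finset.univ.filter fun w : (ZMod (3 ^ k))ˣ =>
        permAct (sigmaPerm w) (mrs (3 ^ k) a b) = mrs (3 ^ k) a b).card := by
      rw [h1]
      exact dvd_mul_left 2 (3 ^ (k - 1))
    exact (Nat.Coprime.pow_right (j - 1) (by norm_num : Nat.Coprime 2 3)).dvd_of_dvd_mul_left
      hdvd2
  set Stab : Subgroup (ZMod (3 ^ k))ˣ :=
    { carrier := {w | permAct (sigmaPerm w) (mrs (3 ^ k) a b) = mrs (3 ^ k) a b}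
      one_mem' := permAct_sigma_one _
      mul_mem' := by
        intro u v hu hv
        show permAct (sigmaPerm (u * v)) _ = _
        rw [← permAct_sigma_mul]
        show permAct (sigmaPerm u) (permAct (sigmaPerm v) _) = _
        rw [hv]
        exact hu
      inv_mem' := by
        intro u hu
        show permAct (sigmaPerm u⁻¹) _ = _
        conv_lhs => rw [← hu]
        rw [permAct_sigma_mul, inv_mul_cancel, permAct_sigma_one] } with hStabdef
  have hcard : Fintype.card Stab = (Finset.univ.filter fun w : (ZMod (3 ^ k))ˣ =>
      permAct (sigmaPerm w) (mrs (3 ^ k) a b) = mrs (3 ^ k) a b).card := by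
    rw [Fintype.card_subtype]
    congr 1
    ext w
    simp only [Finset.mem_filter]
    exact and_congr_right fun _ => Iff.rfl
  obtain ⟨g, hg⟩ := exists_prime_orderOf_dvd_card (G := Stab) 2 (by rw [hcard]; exact heven)
  have hw2 : (g : (ZMod (3 ^ k))ˣ) ^ 2 = 1 := by
    have hpow := pow_orderOf_eq_one g
    rw [hg] at hpow
    have := congrArg (fun z : Stab => (z : (ZMod (3 ^ k))ˣ)) hpow
    simpa using this
  have hw1 : (g : (ZMod (3 ^ k))ˣ) ≠ 1 := by
    intro hh
    have hgone : g = 1 := Subtype.ext (by simpa using hh)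
    rw [hgone, orderOf_one] at hg
    norm_num at hg
  have hneg := units_val_eq_neg_one hk _ hw2 hw1
  have hstab : permAct (sigmaPerm (g : (ZMod (3 ^ k))ˣ)) (mrs (3 ^ k) a b)
      = mrs (3 ^ k) a b := g.2
  rw [permAct_sigma_mrs, hneg, neg_one_mul, neg_one_mul] at hstab
  have hcases := mrs_eq_cases hodd (neg_ne_zero.mpr ha) (neg_ne_zero.mpr hb)
    (fun hh => hab (neg_injective hh)) ha hb hab hstab
  obtain ⟨c, hc, hF⟩ : ∃ c : ZMod (3 ^ k), c ≠ 0 ∧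
      mrs (3 ^ k) a b = mrs (3 ^ k) c (2 * c) := by
    rcases hcases with ⟨h1, -⟩ | ⟨-, h2⟩ | ⟨-, h2⟩ | ⟨h1, -⟩ | ⟨h1, -⟩ | ⟨h1, -⟩
    · exfalso
      apply ha
      have h2a : (2 : ZMod (3 ^ k)) * a = 0 := by linear_combination h1
      exact (h2u.mul_right_eq_zero).mp h2a
    · refine ⟨-a, neg_ne_zero.mpr ha, ?_⟩
      rw [show b = -a by linear_combination h2]
      exact mrs_neg_self a
    · refine ⟨b, hb, ?_⟩
      rw [show a = 2 * b by linear_combination -h2]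
      exact mrs_swap _ _
    · exact absurd (by linear_combination h1) hb
    · exact absurd (by linear_combination h1) hab
    · refine ⟨a, ha, ?_⟩
      rw [show b = 2 * a by linear_combination -h1]
  rw [hF] at hS ⊢
  obtain ⟨m, hm, u₀, hceq⟩ := rep_pow3 hc
  rw [hceq] at hS ⊢
  rw [orbit_mrs_ap_ncard hm u₀] at hS
  have hmkj : m = k - j := by
    have := Nat.pow_right_injective (by norm_num : 2 ≤ 3) hS
    omega
  subst hmkj
  rw [htarget]
  have hact : permAct (sigmaPerm u₀) (mrs (3 ^ k)
        (((1 : (ZMod (3 ^ k))ˣ) : ZMod (3 ^ k)) * 3 ^ (k - j))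
        (2 * (((1 : (ZMod (3 ^ k))ˣ) : ZMod (3 ^ k)) * 3 ^ (k - j))))
      = mrs (3 ^ k) ((u₀ : ZMod (3 ^ k)) * 3 ^ (k - j))
        (2 * ((u₀ : ZMod (3 ^ k)) * 3 ^ (k - j))) := by
    rw [permAct_sigma_mrs]
    have e1 : (u₀ : ZMod (3 ^ k)) * (((1 : (ZMod (3 ^ k))ˣ) : ZMod (3 ^ k)) * 3 ^ (k - j))
        = (u₀ : ZMod (3 ^ k)) * 3 ^ (k - j) := by
      simp only [Units.val_one, one_mul]
    have e2 : (u₀ : ZMod (3 ^ k)) * (2 * (((1 : (ZMod (3 ^ k))ˣ) : ZMod (3 ^ k)) * 3 ^ (k - j)))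
        = 2 * ((u₀ : ZMod (3 ^ k)) * 3 ^ (k - j)) := by
      simp only [Units.val_one, one_mul]
      ring
    exact congrArg₂ _ e1 e2
  rw [← hact, orbit_permAct]
end
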